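/- arXiv:1806.10462 — 6 statements merged into one kernel-verified Lean document; each statement's English description precedes it below -/
import Mathlib

section
/- If R is a quasi-homomorphism from an abelian group G to an abelian group H, and S is a quasi-homomorphism from H to an abelian group K, then the composition S ∘ R = {(a,c) ∈ G × K : there is b ∈ H with (a,b) ∈ R and (b,c) ∈ S} is a quasi-homomorphism from G to K. -/
namespace QH

variable {G H K : Type*} [AddCommGroup G] [AddCommGroup H] [AddCommGroup K]

def dom (R : AddSubgroup (G × H)) : AddSubgroup G := R.map (AddMonoidHom.fst G H)

def coker (R : AddSubgroup (G × H)) : AddSubgroup H := R.comap (AddMonoidHom.inr G H)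

def IsQuasiHom (R : AddSubgroup (G × H)) : Prop :=
  (dom R).FiniteIndex ∧ ((coker R : Set H)).Finite

/-- The composition of additive relations `R ≤ G × H` and `S ≤ H × K`:
`S ∘ R = {(a,c) : ∃ b, (a,b) ∈ R ∧ (b,c) ∈ S}`. -/
def relComp (S : AddSubgroup (H × K)) (R : AddSubgroup (G × H)) : AddSubgroup (G × K) where
  carrier := {p | ∃ b, (p.1, b) ∈ R ∧ (b, p.2) ∈ S}
  zero_mem' := ⟨0, R.zero_mem, S.zero_mem⟩
  add_mem' := by
    rintro ⟨a, c⟩ ⟨a', c'⟩ ⟨b, hb, hb'⟩ ⟨d, hd, hd'⟩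
    exact ⟨b + d, R.add_mem hb hd, S.add_mem hb' hd'⟩
  neg_mem' := by
    rintro ⟨a, c⟩ ⟨b, hb, hb'⟩
    exact ⟨-b, R.neg_mem hb, S.neg_mem hb'⟩

theorem relComp_isQuasiHom (R : AddSubgroup (G × H)) (S : AddSubgroup (H × K))
    (hR : IsQuasiHom R) (hS : IsQuasiHom S) : IsQuasiHom (relComp S R) := by
  obtain ⟨hRi, hRc⟩ := hR
  obtain ⟨hSi, hSc⟩ := hS
  constructor
  · -- finite index part
    set f := AddMonoidHom.fst G H with hf
    set C : AddSubgroup (G × H) := (dom S).comap (AddMonoidHom.snd G H) with hC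
    set T : AddSubgroup (G × H) := C ⊓ R with hT
    set N : AddSubgroup (G × H) := f.ker with hN
    have hfsurj : Function.Surjective f := Prod.fst_surjective
    have hfrange : f.range = ⊤ := AddMonoidHom.range_eq_top_of_surjective f hfsurj
    have hCindex : C.index = (dom S).index :=
      AddSubgroup.index_comap_of_surjective _ Prod.snd_surjective
    have h2 : C.relIndex R ≠ 0 := by
      intro h0
      exact hSi.index_ne_zero (by
        rw [← hCindex]
        exact (zero_dvd_iff.mp (h0 ▸ AddSubgroup.relIndex_dvd_index_of_normal C R)))
    have hT2 : T.relIndex R ≠ 0 := by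
      rwa [hT, AddSubgroup.inf_relIndex_right]
    have h3 : (T ⊔ N).relIndex R ≠ 0 := fun h0 =>
      hT2 (AddSubgroup.relIndex_eq_zero_of_le_left le_sup_left h0)
    have hsupeq : R ⊔ (T ⊔ N) = R ⊔ N := by
      rw [← sup_assoc, sup_eq_left.mpr (inf_le_right : T ≤ R)]
    have h4 : (T ⊔ N).relIndex (R ⊔ N) ≠ 0 := by
      rw [← hsupeq, AddSubgroup.relIndex_sup_right]
      exact h3
    have h5 : (R ⊔ N).index ≠ 0 := by
      intro h0
      apply hRi.index_ne_zero
      have : (R.map f).index = (R ⊔ f.ker).index * f.range.index := AddSubgroup.index_map R f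
      rw [hfrange, AddSubgroup.index_top, mul_one, ← hN, h0] at this
      exact this
    have h6 : (T ⊔ N).index ≠ 0 := by
      intro h0
      rw [← AddSubgroup.relIndex_mul_index (sup_le_sup_right (inf_le_right : T ≤ R) N)] at h0
      rcases mul_eq_zero.mp h0 with h | h
      · exact h4 h
      · exact h5 h
    have h7 : (dom T).index ≠ 0 := by
      have : (T.map f).index = (T ⊔ f.ker).index * f.range.index := AddSubgroup.index_map T f
      rw [hfrange, AddSubgroup.index_top, mul_one, ← hN] at this
      show (T.map f).index ≠ 0
      rw [this]
      exact h6
    have hTle : dom T ≤ dom (relComp S R) := by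
      rintro a ⟨⟨a', b⟩, ⟨hdom, hRmem⟩, rfl⟩
      obtain ⟨⟨b', c⟩, hc, rfl⟩ := hdom
      exact ⟨(a', c), ⟨b', hRmem, hc⟩, rfl⟩
    haveI : (dom T).FiniteIndex := ⟨h7⟩
    exact AddSubgroup.finiteIndex_of_le hTle
  · -- finite cokernel part
    have hsub : (coker (relComp S R) : Set K) ⊆
        ⋃ b ∈ (coker R : Set H), {c | (b, c) ∈ S} := by
      rintro c ⟨b, hb, hbc⟩
      exact Set.mem_biUnion hb hbc
    refine Set.Finite.subset (Set.Finite.biUnion hRc fun b _ => ?_) hsub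
    by_cases hex : ∃ c0, (b, c0) ∈ S
    · obtain ⟨c0, hc0⟩ := hex
      apply (hSc.image (c0 + ·)).subset
      intro c hc
      refine ⟨c - c0, ?_, by simp⟩
      have := S.sub_mem hc hc0
      exact (by simpa using this : ((0 : H), c - c0) ∈ S)
    · have : {c | (b, c) ∈ S} = ∅ := by
        ext c; simp only [Set.mem_setOf_eq, Set.mem_empty_iff_false, iff_false]
        exact fun h => hex ⟨c, h⟩
      rw [this]; exact Set.finite_empty

end QH
end

section
/- Let R be an additive relation between abelian groups G and H such that im R has finite index in H and ker R is finite. Then R⁻¹ is a quasi-homomorphism from H to G. If moreover R is itself a quasi-homomorphism from G to H, then R ∘ R⁻¹ ≡ id_H and R⁻¹ ∘ R ≡ id_G. -/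
namespace QH

variable {G H K : Type*} [AddCommGroup G] [AddCommGroup H] [AddCommGroup K]

def img (R : AddSubgroup (G × H)) : AddSubgroup H := R.map (AddMonoidHom.snd G H)

def ker (R : AddSubgroup (G × H)) : AddSubgroup G := R.comap (AddMonoidHom.inl G H)

/-- The sum of two additive relations: `R + R' = {(a, b+b') : (a,b) ∈ R, (a,b') ∈ R'}`. -/
def relAdd (R R' : AddSubgroup (G × H)) : AddSubgroup (G × H) where
  carrier := {p | ∃ b b', (p.1, b) ∈ R ∧ (p.1, b') ∈ R' ∧ p.2 = b + b'}
  zero_mem' := ⟨0, 0, R.zero_mem, R'.zero_mem, by simp⟩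
  add_mem' := by
    rintro ⟨a, c⟩ ⟨a', c'⟩ ⟨b, b', hb, hb', rfl⟩ ⟨d, d', hd, hd', rfl⟩
    exact ⟨b + d, b' + d', R.add_mem hb hd, R'.add_mem hb' hd', by simp only [Prod.snd_add]; abel⟩
  neg_mem' := by
    rintro ⟨a, c⟩ ⟨b, b', hb, hb', rfl⟩
    exact ⟨-b, -b', R.neg_mem hb, R'.neg_mem hb', by simp only [Prod.snd_neg]; abel⟩

/-- The inverse of an additive relation: `R⁻¹ = {(h,g) : (g,h) ∈ R}`. -/
def relInv (R : AddSubgroup (G × H)) : AddSubgroup (H × G) :=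
  R.map ((AddMonoidHom.snd G H).prod (AddMonoidHom.fst G H))

/-- The diagonal relation `id_D = {(d,d) : d ∈ D}` of a subgroup `D ≤ A`. -/
def relId {A : Type*} [AddCommGroup A] (D : AddSubgroup A) : AddSubgroup (A × A) :=
  D.map ((AddMonoidHom.id A).prod (AddMonoidHom.id A))


/-- Two additive relations `R, R' ≤ G × H` are equivalent if there are a finite-index
subgroup `G₁ ≤ G` and a finite subgroup `F ≤ H` with
`(R ∩ (G₁ × H)) + (G₁ × F) = (R' ∩ (G₁ × H)) + (G₁ × F)`. -/
def relEquiv (R R' : AddSubgroup (G × H)) : Prop :=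
  ∃ (G₁ : AddSubgroup G) (F : AddSubgroup H), G₁.FiniteIndex ∧ ((F : Set H)).Finite ∧
    relAdd (R ⊓ G₁.prod ⊤) (G₁.prod F) = relAdd (R' ⊓ G₁.prod ⊤) (G₁.prod F)


lemma mem_relInv {R : AddSubgroup (G × H)} {h : H} {g : G} :
    (h, g) ∈ relInv R ↔ (g, h) ∈ R := by
  constructor
  · rintro ⟨⟨a, b⟩, hm, heq⟩
    obtain ⟨h1, h2⟩ := Prod.mk.injEq .. |>.mp heq
    subst h1; subst h2; exact hm
  · intro hm
    exact ⟨(g, h), hm, rfl⟩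

lemma mem_relAdd {R R' : AddSubgroup (G × H)} {p : G × H} :
    p ∈ relAdd R R' ↔ ∃ b b', (p.1, b) ∈ R ∧ (p.1, b') ∈ R' ∧ p.2 = b + b' := Iff.rfl

lemma mem_relComp {S : AddSubgroup (H × K)} {R : AddSubgroup (G × H)} {p : G × K} :
    p ∈ relComp S R ↔ ∃ b, (p.1, b) ∈ R ∧ (b, p.2) ∈ S := Iff.rfl

lemma mem_relId_top {A : Type*} [AddCommGroup A] {p : A × A} :
    p ∈ relId (⊤ : AddSubgroup A) ↔ p.1 = p.2 := by
  constructor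
  · rintro ⟨a, -, rfl⟩
    rfl
  · intro h
    exact ⟨p.1, trivial, by cases p; simp_all⟩

lemma dom_relInv (R : AddSubgroup (G × H)) : dom (relInv R) = img R := by
  ext h
  constructor
  · rintro ⟨⟨h', g⟩, hm, rfl⟩
    exact ⟨(g, h'), mem_relInv.mp hm, rfl⟩
  · rintro ⟨⟨g, h'⟩, hm, rfl⟩
    exact ⟨(h', g), mem_relInv.mpr hm, rfl⟩

lemma coker_relInv (R : AddSubgroup (G × H)) : coker (relInv R) = ker R := by
  ext g
  simp only [coker, ker, AddSubgroup.mem_comap, AddMonoidHom.inr_apply, AddMonoidHom.inl_apply]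
  exact mem_relInv

theorem relInv_isQuasiHom (R : AddSubgroup (G × H))
    (himg : (img R).FiniteIndex) (hker : ((ker R : Set G)).Finite) :
    IsQuasiHom (relInv R) ∧
      (IsQuasiHom R →
        relEquiv (relComp R (relInv R)) (relId (⊤ : AddSubgroup H)) ∧
        relEquiv (relComp (relInv R) R) (relId (⊤ : AddSubgroup G))) := by
  constructor
  · refine ⟨?_, ?_⟩
    · rw [dom_relInv]; exact himg
    · rw [coker_relInv]; exact hker
  · rintro ⟨hdom, hcoker⟩
    constructor
    · refine ⟨img R, coker R, himg, hcoker, ?_⟩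
      ext ⟨h, k⟩
      simp only [mem_relAdd, AddSubgroup.mem_inf, AddSubgroup.mem_prod,
        AddSubgroup.mem_top, and_true, mem_relComp, mem_relId_top]
      constructor
      · rintro ⟨b, b', ⟨⟨g, hg1, hg2⟩, hhi⟩, ⟨hhi', hb'⟩, rfl⟩
        have hdiff : b - h ∈ coker R := by
          have := R.sub_mem hg2 (mem_relInv.mp hg1)
          simpa [coker] using this
        refine ⟨h, b - h + b', ⟨rfl, hhi⟩, ⟨hhi, (coker R).add_mem hdiff hb'⟩, by abel⟩
      · rintro ⟨b, b', ⟨rfl, hhi⟩, ⟨-, hb'⟩, rfl⟩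
        obtain ⟨⟨g, h'⟩, hm, rfl⟩ := hhi
        refine ⟨h', b', ⟨⟨g, mem_relInv.mpr hm, hm⟩, ⟨(g, h'), hm, rfl⟩⟩, ⟨⟨(g, h'), hm, rfl⟩, hb'⟩, rfl⟩
    · refine ⟨dom R, ker R, hdom, hker, ?_⟩
      ext ⟨g, k⟩
      simp only [mem_relAdd, AddSubgroup.mem_inf, AddSubgroup.mem_prod,
        AddSubgroup.mem_top, and_true, mem_relComp, mem_relId_top]
      constructor
      · rintro ⟨b, b', ⟨⟨h, hg1, hg2⟩, hgd⟩, ⟨hgd', hb'⟩, rfl⟩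
        have hg2' : (b, h) ∈ R := mem_relInv.mp hg2
        have hdiff : b - g ∈ ker R := by
          have := R.sub_mem hg2' hg1
          simpa [ker] using this
        refine ⟨g, b - g + b', ⟨rfl, hgd⟩, ⟨hgd, (ker R).add_mem hdiff hb'⟩, by abel⟩
      · rintro ⟨b, b', ⟨rfl, hgd⟩, ⟨-, hb'⟩, rfl⟩
        obtain ⟨⟨g', h⟩, hm, rfl⟩ := hgd
        refine ⟨g', b', ⟨⟨h, hm, mem_relInv.mpr hm⟩, ⟨(g', h), hm, rfl⟩⟩, ⟨⟨(g', h), hm, rfl⟩, hb'⟩, rfl⟩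


end QH
end

section
/- Let g be an additive relation between abelian groups G and H such that ker g is finite and dom g has finite index in G. If G₁ is a subgroup of G of infinite index, then the subgroup g[G₁] = {h ∈ H : ∃a ∈ G₁, (a,h) ∈ g} has infinite index in im g. -/
namespace QH

variable {G H : Type*} [AddCommGroup G] [AddCommGroup H]

/-- `g⁻¹[B] = {a ∈ G : ∃ b ∈ B, (a,b) ∈ g}`. -/
def relPreimg (g : AddSubgroup (G × H)) (B : AddSubgroup H) : AddSubgroup G :=
  dom (g ⊓ (⊤ : AddSubgroup G).prod B)

/-- `g[A] = {h ∈ H : ∃ a ∈ A, (a,h) ∈ g}`. -/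
def relImg (g : AddSubgroup (G × H)) (A : AddSubgroup G) : AddSubgroup H :=
  img (g ⊓ A.prod (⊤ : AddSubgroup H))

lemma mem_dom {g : AddSubgroup (G × H)} {a : G} : a ∈ dom g ↔ ∃ b, (a, b) ∈ g := by
  constructor
  · rintro ⟨⟨x, y⟩, hx, rfl⟩; exact ⟨y, hx⟩
  · rintro ⟨b, hb⟩; exact ⟨(a, b), hb, rfl⟩

lemma mem_img {g : AddSubgroup (G × H)} {b : H} : b ∈ img g ↔ ∃ a, (a, b) ∈ g := by
  constructor
  · rintro ⟨⟨x, y⟩, hx, rfl⟩; exact ⟨x, hx⟩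
  · rintro ⟨a, ha⟩; exact ⟨(a, b), ha, rfl⟩

lemma mem_ker {g : AddSubgroup (G × H)} {a : G} : a ∈ ker g ↔ ((a, (0 : H)) : G × H) ∈ g :=
  Iff.rfl

lemma mem_relImg {g : AddSubgroup (G × H)} {A : AddSubgroup G} {h : H} :
    h ∈ relImg g A ↔ ∃ a ∈ A, (a, h) ∈ g := by
  unfold relImg
  rw [mem_img]
  constructor
  · rintro ⟨a, ha⟩
    exact ⟨a, ha.2.1, ha.1⟩
  · rintro ⟨a, haA, hag⟩
    exact ⟨a, hag, haA, trivial⟩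

lemma mem_relPreimg {g : AddSubgroup (G × H)} {B : AddSubgroup H} {a : G} :
    a ∈ relPreimg g B ↔ ∃ b ∈ B, (a, b) ∈ g := by
  unfold relPreimg
  rw [mem_dom]
  constructor
  · rintro ⟨b, hb⟩
    exact ⟨b, hb.2.2, hb.1⟩
  · rintro ⟨b, hbB, hbg⟩
    exact ⟨b, hbg, trivial, hbB⟩

/-- if `ker g` is finite and `dom g` has finite index in `G`, and `G₁ ≤ G`
has infinite index in `G`, then `g[G₁]` has infinite index in `im g`. -/
theorem relImg_infinite_relindex (g : AddSubgroup (G × H)) (G₁ : AddSubgroup G)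
    (hker : ((ker g : Set G)).Finite) (hdom : (dom g).FiniteIndex)
    (hG₁ : G₁.index = 0) :
    (relImg g G₁).relIndex (img g) = 0 := by
  by_contra hB
  set B := relImg g G₁ with hBdef
  set P := relPreimg g B with hPdef
  have hBle : B ≤ img g := by
    intro b hb
    obtain ⟨a, _, hab⟩ := mem_relImg.mp hb
    exact mem_img.mpr ⟨a, hab⟩
  have hPle : P ≤ dom g := by
    intro a ha
    obtain ⟨b, _, hab⟩ := mem_relPreimg.mp ha
    exact mem_dom.mpr ⟨b, hab⟩
  -- target quotient is finite
  have hfinB : Finite ((img g) ⧸ B.addSubgroupOf (img g)) := by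
    have : B.relIndex (img g) = Nat.card ((img g) ⧸ B.addSubgroupOf (img g)) :=
      AddSubgroup.index_eq_card _
    rw [this] at hB
    exact (Nat.card_ne_zero.mp hB).2
  -- choose witnesses for the domain
  have hchoice : ∀ a : dom g, ∃ b : H, ((a : G), b) ∈ g := fun a => mem_dom.mp a.2
  choose φ hφ using hchoice
  have hφmem : ∀ a : dom g, φ a ∈ img g := fun a => mem_img.mpr ⟨a, hφ a⟩
  set Q := (dom g) ⧸ P.addSubgroupOf (dom g) with hQdef
  let f0 : dom g → (img g) ⧸ B.addSubgroupOf (img g) :=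
    fun a => QuotientAddGroup.mk ⟨φ a, hφmem a⟩
  have hconst : ∀ a a' : dom g, -a + a' ∈ P.addSubgroupOf (dom g) → f0 a = f0 a' := by
    intro a a' hmem
    rw [AddSubgroup.mem_addSubgroupOf] at hmem
    obtain ⟨b, hbB, hab⟩ := mem_relPreimg.mp hmem
    have hab' : ((-(a : G) + a', b) : G × H) ∈ g := by push_cast at hab; exact hab
    have h0 : ((0 : G), φ a' - φ a - b) ∈ g := by
      have h1 := g.sub_mem (g.sub_mem (hφ a') (hφ a)) hab'
      simp only [Prod.mk_sub_mk] at h1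
      have e1 : (a' : G) - a - (-(a : G) + a') = 0 := by abel
      rwa [e1] at h1
    have hcB : φ a' - φ a - b ∈ B := mem_relImg.mpr ⟨0, zero_mem _, h0⟩
    have hfin : φ a' - φ a ∈ B := by
      have := B.add_mem hcB hbB
      simpa using this
    apply (QuotientAddGroup.eq).mpr
    rw [AddSubgroup.mem_addSubgroupOf]
    show -(φ a) + φ a' ∈ B
    rwa [neg_add_eq_sub]
  let f : Q → (img g) ⧸ B.addSubgroupOf (img g) :=
    Quotient.lift f0 (fun a a' h => hconst a a' ((QuotientAddGroup.leftRel_apply).mp h))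
  have hinj : Function.Injective f := by
    intro x y
    refine Quotient.inductionOn₂ x y ?_
    intro a a' heq
    have hBmem : -(φ a) + φ a' ∈ B := by
      have := (QuotientAddGroup.eq).mp (heq : f0 a = f0 a')
      rwa [AddSubgroup.mem_addSubgroupOf] at this
    have hgd : (((a' : G) - a, φ a' - φ a) : G × H) ∈ g := by
      have h2 := g.sub_mem (hφ a') (hφ a)
      simpa only [Prod.mk_sub_mk] using h2
    have hP : (↑a' - ↑a : G) ∈ P := mem_relPreimg.mpr
      ⟨φ a' - φ a, by rwa [neg_add_eq_sub] at hBmem, hgd⟩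
    refine Quotient.sound ((QuotientAddGroup.leftRel_apply).mpr ?_)
    rw [AddSubgroup.mem_addSubgroupOf]
    show -(↑a : G) + ↑a' ∈ P
    rwa [neg_add_eq_sub]
  have hfinQ : Finite Q := Finite.of_injective f hinj
  have hrelP : P.relIndex (dom g) ≠ 0 := by
    rw [AddSubgroup.relIndex, AddSubgroup.index_eq_card]
    exact Nat.card_ne_zero.mpr ⟨⟨(0 : Q)⟩, hfinQ⟩
  have hPindex : P.index ≠ 0 := by
    rw [← AddSubgroup.relIndex_mul_index hPle]
    exact Nat.mul_ne_zero hrelP hdom.index_ne_zero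
  -- P ≤ G₁ ⊔ ker g
  have hPsub : P ≤ G₁ ⊔ ker g := by
    intro a ha
    obtain ⟨b, hbB, hab⟩ := mem_relPreimg.mp ha
    obtain ⟨a₁, ha₁, ha₁b⟩ := mem_relImg.mp hbB
    have hk : a - a₁ ∈ ker g := by
      rw [mem_ker]
      have h3 := g.sub_mem hab ha₁b
      simpa only [Prod.mk_sub_mk, sub_self] using h3
    have : a = a₁ + (a - a₁) := by abel
    rw [this]
    exact add_mem (AddSubgroup.mem_sup_left ha₁) (AddSubgroup.mem_sup_right hk)
  have hsupindex : (G₁ ⊔ ker g).index ≠ 0 := by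
    intro h0
    exact hPindex (Nat.eq_zero_of_zero_dvd (h0 ▸ AddSubgroup.index_dvd_of_le hPsub))
  -- quotient of sup by G₁ is finite (surjection from ker g)
  have hkfin : Finite (ker g) := hker.to_subtype
  have hsurj : Function.Surjective
      (fun k : ker g => (QuotientAddGroup.mk ⟨(k : G), AddSubgroup.mem_sup_right k.2⟩ :
        (G₁ ⊔ ker g : AddSubgroup G) ⧸ G₁.addSubgroupOf (G₁ ⊔ ker g))) := by
    intro q
    refine QuotientAddGroup.induction_on q ?_
    rintro ⟨x, hx⟩
    obtain ⟨a, haG₁, k, hk, hx'⟩ := AddSubgroup.mem_sup.mp hx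
    refine ⟨⟨k, hk⟩, ?_⟩
    apply (QuotientAddGroup.eq).mpr
    rw [AddSubgroup.mem_addSubgroupOf]
    show -k + x ∈ G₁
    have : -k + x = a := by rw [← hx']; abel
    rwa [this]
  have hfinsup : Finite ((G₁ ⊔ ker g : AddSubgroup G) ⧸ G₁.addSubgroupOf (G₁ ⊔ ker g)) :=
    Finite.of_surjective _ hsurj
  have hrelG₁ : G₁.relIndex (G₁ ⊔ ker g) ≠ 0 := by
    rw [AddSubgroup.relIndex, AddSubgroup.index_eq_card]
    exact Nat.card_ne_zero.mpr ⟨⟨0⟩, hfinsup⟩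
  have := AddSubgroup.relIndex_mul_index (le_sup_left : G₁ ≤ G₁ ⊔ ker g)
  rw [hG₁] at this
  exact (Nat.mul_ne_zero hrelG₁ hsupindex) this

end QH
end

section
/- Let λ : G × H ⇀ K be a bilinear quasi-form and let g, g' ∈ G be such that ann_H(g') ⪅ ann_H(g) and im λ_g ⪅ im λ_{g'}. Consider the additive relation λ_{g,g'} = {(h,h') ∈ H × H : λ(g,h) and λ(g',h') are both defined and equal}. Then the relation λ̄_{g,g'} on the quotient H/ann_H(g'), defined by (x + ann_H(g'), y + ann_H(g')) ∈ λ̄_{g,g'} if and only if (x', y) ∈ λ_{g,g'} for some x' ∈ x + ann_H(g'), is well defined (independent of the representative y of its coset) and is a quasi-endomorphism of H/ann_H(g'), i.e. its domain has finite index in H/ann_H(g') and its cokernel is finite. -/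
namespace BQF

variable {G H K : Type*} [AddCommGroup G] [AddCommGroup H] [AddCommGroup K]

/-- `X` is almost contained in `Y` (written `X ⪅ Y`) if `X ∩ Y` has finite index in `X`. -/
def AlmostLE {A : Type*} [AddCommGroup A] (X Y : AddSubgroup A) : Prop :=
  (X ⊓ Y).relIndex X ≠ 0

/-- A bilinear quasi-form `λ : G × H ⇀ K`: a partial function such that every
`λ_g = λ(g,·)` is a group homomorphism defined exactly on a finite-index subgroup
`domLeft g ≤ H`, and every `λ'_h = λ(·,h)` is a group homomorphism defined exactly on a
finite-index subgroup `domRight h ≤ G`.  The value `toFun g h` is only meaningful when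
`h ∈ domLeft g` (equivalently, `g ∈ domRight h`). -/
structure BilinQuasiForm (G H K : Type*)
    [AddCommGroup G] [AddCommGroup H] [AddCommGroup K] where
  toFun : G → H → K
  domLeft : G → AddSubgroup H
  domRight : H → AddSubgroup G
  dom_compat : ∀ g h, h ∈ domLeft g ↔ g ∈ domRight h
  finiteIndex_left : ∀ g, (domLeft g).FiniteIndex
  finiteIndex_right : ∀ h, (domRight h).FiniteIndex
  add_left : ∀ g, ∀ h ∈ domLeft g, ∀ h' ∈ domLeft g,
    toFun g (h + h') = toFun g h + toFun g h'
  add_right : ∀ h, ∀ g ∈ domRight h, ∀ g' ∈ domRight h,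
    toFun (g + g') h = toFun g h + toFun g' h

namespace BilinQuasiForm

variable (lam : BilinQuasiForm G H K)

theorem toFun_zero_left (g : G) : lam.toFun g 0 = 0 := by
  have h0 := lam.add_left g 0 (lam.domLeft g).zero_mem 0 (lam.domLeft g).zero_mem
  rw [add_zero] at h0
  exact (left_eq_add.mp h0)

theorem toFun_zero_right (h : H) : lam.toFun 0 h = 0 := by
  have h0 := lam.add_right h 0 (lam.domRight h).zero_mem 0 (lam.domRight h).zero_mem
  rw [add_zero] at h0
  exact (left_eq_add.mp h0)

theorem toFun_neg_left (g : G) (h : H) (hh : h ∈ lam.domLeft g) :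
    lam.toFun g (-h) = -lam.toFun g h := by
  have h0 := lam.add_left g h hh (-h) ((lam.domLeft g).neg_mem hh)
  rw [add_neg_cancel, lam.toFun_zero_left] at h0
  exact eq_neg_of_add_eq_zero_right h0.symm

theorem toFun_neg_right (g : G) (h : H) (hg : g ∈ lam.domRight h) :
    lam.toFun (-g) h = -lam.toFun g h := by
  have h0 := lam.add_right h g hg (-g) ((lam.domRight h).neg_mem hg)
  rw [add_neg_cancel, lam.toFun_zero_right] at h0
  exact eq_neg_of_add_eq_zero_right h0.symm

/-- `ann_H(g) = ker λ_g`. -/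
def annH (g : G) : AddSubgroup H where
  carrier := {h | h ∈ lam.domLeft g ∧ lam.toFun g h = 0}
  zero_mem' := ⟨(lam.domLeft g).zero_mem, lam.toFun_zero_left g⟩
  add_mem' := by
    rintro a b ⟨ha, ha0⟩ ⟨hb, hb0⟩
    exact ⟨(lam.domLeft g).add_mem ha hb,
      by rw [lam.add_left g a ha b hb, ha0, hb0, add_zero]⟩
  neg_mem' := by
    rintro a ⟨ha, ha0⟩
    exact ⟨(lam.domLeft g).neg_mem ha,
      by rw [lam.toFun_neg_left g a ha, ha0, neg_zero]⟩

/-- `ann_G(h) = ker λ'_h`. -/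
def annG (h : H) : AddSubgroup G where
  carrier := {g | g ∈ lam.domRight h ∧ lam.toFun g h = 0}
  zero_mem' := ⟨(lam.domRight h).zero_mem, lam.toFun_zero_right h⟩
  add_mem' := by
    rintro a b ⟨ha, ha0⟩ ⟨hb, hb0⟩
    exact ⟨(lam.domRight h).add_mem ha hb,
      by rw [lam.add_right h a ha b hb, ha0, hb0, add_zero]⟩
  neg_mem' := by
    rintro a ⟨ha, ha0⟩
    exact ⟨(lam.domRight h).neg_mem ha,
      by rw [lam.toFun_neg_right a h ha, ha0, neg_zero]⟩

/-- `im λ_g`. -/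
def imLeft (g : G) : AddSubgroup K where
  carrier := {k | ∃ h ∈ lam.domLeft g, lam.toFun g h = k}
  zero_mem' := ⟨0, (lam.domLeft g).zero_mem, lam.toFun_zero_left g⟩
  add_mem' := by
    rintro a b ⟨h1, hh1, rfl⟩ ⟨h2, hh2, rfl⟩
    exact ⟨h1 + h2, (lam.domLeft g).add_mem hh1 hh2, lam.add_left g h1 hh1 h2 hh2⟩
  neg_mem' := by
    rintro a ⟨h1, hh1, rfl⟩
    exact ⟨-h1, (lam.domLeft g).neg_mem hh1, lam.toFun_neg_left g h1 hh1⟩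

/-- The additive relation `λ_{g,g'} = {(h,h') : λ(g,h), λ(g',h') both defined and equal}`. -/
def pairRel (g g' : G) : AddSubgroup (H × H) where
  carrier := {p | p.1 ∈ lam.domLeft g ∧ p.2 ∈ lam.domLeft g' ∧
    lam.toFun g p.1 = lam.toFun g' p.2}
  zero_mem' := ⟨(lam.domLeft g).zero_mem, (lam.domLeft g').zero_mem, by
    show lam.toFun g (0 : H) = lam.toFun g' (0 : H)
    rw [lam.toFun_zero_left, lam.toFun_zero_left]⟩
  add_mem' := by
    rintro ⟨a, b⟩ ⟨c, d⟩ ⟨ha, hb, he⟩ ⟨hc, hd, he'⟩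
    refine ⟨(lam.domLeft g).add_mem ha hc, (lam.domLeft g').add_mem hb hd, ?_⟩
    show lam.toFun g (a + c) = lam.toFun g' (b + d)
    rw [lam.add_left g a ha c hc, lam.add_left g' b hb d hd, he, he']
  neg_mem' := by
    rintro ⟨a, b⟩ ⟨ha, hb, he⟩
    refine ⟨(lam.domLeft g).neg_mem ha, (lam.domLeft g').neg_mem hb, ?_⟩
    show lam.toFun g (-a) = lam.toFun g' (-b)
    rw [lam.toFun_neg_left g a ha, lam.toFun_neg_left g' b hb, he]

end BilinQuasiForm

/-- Domain of an additive relation. -/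
def relDom {A B : Type*} [AddCommGroup A] [AddCommGroup B]
    (R : AddSubgroup (A × B)) : AddSubgroup A := R.map (AddMonoidHom.fst A B)

/-- Cokernel of an additive relation. -/
def relCoker {A B : Type*} [AddCommGroup A] [AddCommGroup B]
    (R : AddSubgroup (A × B)) : AddSubgroup B := R.comap (AddMonoidHom.inr A B)

/-- A quasi-homomorphism: an additive relation whose domain has finite index and whose
cokernel is finite. -/
def IsQuasiHom {A B : Type*} [AddCommGroup A] [AddCommGroup B]
    (R : AddSubgroup (A × B)) : Prop :=
  (relDom R).FiniteIndex ∧ ((relCoker R : Set B)).Finite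

namespace BilinQuasiForm

theorem mem_annH_iff {lam : BilinQuasiForm G H K} {g : G} {h : H} :
    h ∈ lam.annH g ↔ h ∈ lam.domLeft g ∧ lam.toFun g h = 0 := Iff.rfl

theorem mem_imLeft_iff {lam : BilinQuasiForm G H K} {g : G} {k : K} :
    k ∈ lam.imLeft g ↔ ∃ h ∈ lam.domLeft g, lam.toFun g h = k := Iff.rfl

theorem mem_pairRel_iff {lam : BilinQuasiForm G H K} {g g' : G} {p : H × H} :
    p ∈ lam.pairRel g g' ↔ p.1 ∈ lam.domLeft g ∧ p.2 ∈ lam.domLeft g' ∧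
      lam.toFun g p.1 = lam.toFun g' p.2 := Iff.rfl

theorem toFun_sub_left (lam : BilinQuasiForm G H K) (g : G) {a b : H}
    (ha : a ∈ lam.domLeft g) (hb : b ∈ lam.domLeft g) :
    lam.toFun g (a - b) = lam.toFun g a - lam.toFun g b := by
  rw [sub_eq_add_neg, lam.add_left g a ha (-b) ((lam.domLeft g).neg_mem hb),
    lam.toFun_neg_left g b hb, ← sub_eq_add_neg]

/-- The homomorphism obtained by restricting `λ_g` to a subgroup of its domain. -/
def homOn (lam : BilinQuasiForm G H K) (g : G) (S : AddSubgroup H)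
    (hS : S ≤ lam.domLeft g) : ↥S →+ K where
  toFun x := lam.toFun g ↑x
  map_zero' := lam.toFun_zero_left g
  map_add' a b := lam.add_left g ↑a (hS a.2) ↑b (hS b.2)

end BilinQuasiForm

/-- if `ann_H(g') ⪅ ann_H(g)` and `im λ_g ⪅ im λ_{g'}`, then the relation
`λ̄_{g,g'}` induced by `λ_{g,g'}` on `H/ann_H(g')` is well defined (independent of the
representative `y` of its coset) and is a quasi-endomorphism of `H/ann_H(g')`. -/
theorem pairRel_induces_quasiEndo (lam : BilinQuasiForm G H K) (g g' : G)
    (h1 : AlmostLE (lam.annH g') (lam.annH g))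
    (h2 : AlmostLE (lam.imLeft g) (lam.imLeft g')) :
    (∀ x y y' : H, y - y' ∈ lam.annH g' →
      ((∃ x' : H, x' - x ∈ lam.annH g' ∧ (x', y) ∈ lam.pairRel g g') ↔
       (∃ x' : H, x' - x ∈ lam.annH g' ∧ (x', y') ∈ lam.pairRel g g'))) ∧
    ∃ R : AddSubgroup ((H ⧸ lam.annH g') × (H ⧸ lam.annH g')),
      (∀ a b : H ⧸ lam.annH g',
        (a, b) ∈ R ↔ ∃ x y : H, QuotientAddGroup.mk x = a ∧ QuotientAddGroup.mk y = b ∧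
          (x, y) ∈ lam.pairRel g g') ∧
      IsQuasiHom R := by
  classical
  set N := lam.annH g' with hN
  constructor
  · -- well-definedness
    intro x y y' hyy'
    have key : ∀ y y' : H, y - y' ∈ N → ∀ x' : H,
        (x' - x ∈ N ∧ (x', y) ∈ lam.pairRel g g') →
        (x' - x ∈ N ∧ (x', y') ∈ lam.pairRel g g') := by
      rintro y y' ⟨hd, h0⟩ x' ⟨hx1, hxd, hyd, heq⟩
      have hy'd : y' ∈ lam.domLeft g' := by
        have := (lam.domLeft g').sub_mem hyd hd
        rwa [sub_sub_cancel] at this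
      refine ⟨hx1, hxd, hy'd, ?_⟩
      have hv : lam.toFun g' (y - (y - y')) = lam.toFun g' y - lam.toFun g' (y - y') :=
        lam.toFun_sub_left g' hyd hd
      rw [sub_sub_cancel, h0, sub_zero] at hv
      show lam.toFun g x' = lam.toFun g' y'
      rw [heq, ← hv]
    constructor
    · rintro ⟨x', hh1, hh2⟩
      exact ⟨x', key y y' hyy' x' ⟨hh1, hh2⟩⟩
    · rintro ⟨x', hh1, hh2⟩
      have : y' - y ∈ N := by
        have := N.neg_mem hyy'
        rwa [neg_sub] at this
      exact ⟨x', key y' y this x' ⟨hh1, hh2⟩⟩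
  · -- the quasi-endomorphism
    let mk : H →+ H ⧸ N := QuotientAddGroup.mk' N
    refine ⟨(lam.pairRel g g').map (mk.prodMap mk), ?_, ?_, ?_⟩
    · -- membership characterization
      intro a b
      constructor
      · intro hab
        obtain ⟨⟨u, v⟩, hp, heq⟩ := AddSubgroup.mem_map.mp hab
        exact ⟨u, v, congrArg Prod.fst heq, congrArg Prod.snd heq, hp⟩
      · rintro ⟨u, v, hu, hv, hp⟩
        exact AddSubgroup.mem_map.mpr ⟨(u, v), hp, Prod.ext hu hv⟩
    · -- domain has finite index
      let φ : ↥(lam.domLeft g) →+ K := lam.homOn g (lam.domLeft g) le_rfl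
      have hrange : φ.range = lam.imLeft g := by
        ext k
        constructor
        · rintro ⟨u, rfl⟩
          exact ⟨↑u, u.2, rfl⟩
        · rintro ⟨h, hh, rfl⟩
          exact ⟨⟨h, hh⟩, rfl⟩
      set P := (lam.imLeft g ⊓ lam.imLeft g').comap φ with hPdef
      have hP : P.index ≠ 0 := by
        rw [hPdef, AddSubgroup.index_comap, hrange]
        exact h2
      set D0 := P.map (lam.domLeft g).subtype with hD0def
      have hD0 : D0.index ≠ 0 := by
        rw [hD0def, AddSubgroup.index_map_subtype]
        exact Nat.mul_ne_zero hP (lam.finiteIndex_left g).index_ne_zero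
      have hle : D0.map mk ≤ relDom ((lam.pairRel g g').map (mk.prodMap mk)) := by
        intro a ha
        obtain ⟨u, hu, rfl⟩ := AddSubgroup.mem_map.mp ha
        obtain ⟨p, hp, rfl⟩ := AddSubgroup.mem_map.mp hu
        have hp' : φ p ∈ lam.imLeft g ⊓ lam.imLeft g' := AddSubgroup.mem_comap.mp hp
        obtain ⟨v, hv, hveq⟩ := hp'.2
        refine AddSubgroup.mem_map.mpr ⟨(mk ↑p, mk v), ?_, rfl⟩
        exact AddSubgroup.mem_map.mpr ⟨(↑p, v), ⟨p.2, hv, hveq.symm⟩, rfl⟩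
      refine ⟨?_⟩
      have hdvd : (relDom ((lam.pairRel g g').map (mk.prodMap mk))).index ∣ D0.index :=
        (AddSubgroup.index_dvd_of_le hle).trans
          (D0.index_map_dvd (QuotientAddGroup.mk'_surjective N))
      intro h0
      exact hD0 (Nat.eq_zero_of_zero_dvd (h0 ▸ hdvd))
    · -- cokernel is finite
      set S := N ⊓ lam.domLeft g with hSdef
      have hS : S ≤ lam.domLeft g := inf_le_right
      set ψ := lam.homOn g S hS with hpsidef
      have hker : (N ⊓ lam.annH g).addSubgroupOf S ≤ ψ.ker := by
        rintro ⟨u, huS⟩ hu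
        have hu' : u ∈ N ⊓ lam.annH g := hu
        exact hu'.2.2
      have hsub1 : N ⊓ lam.annH g ≤ S := le_inf inf_le_left (fun u hu => hu.2.1)
      have hT : ((N ⊓ lam.annH g).addSubgroupOf S).index ≠ 0 := by
        intro h0
        apply h1
        have := AddSubgroup.relIndex_mul_relIndex (N ⊓ lam.annH g) S N hsub1 inf_le_left
        have h0' : (N ⊓ lam.annH g).relIndex S = 0 := h0
        rw [h0', zero_mul] at this
        exact this.symm
      have hkerFI : ψ.ker.FiniteIndex := by
        refine ⟨fun h0 => hT (Nat.eq_zero_of_zero_dvd ?_)⟩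
        exact h0 ▸ AddSubgroup.index_dvd_of_le hker
      haveI := hkerFI
      have hfinQ : Finite (↥S ⧸ ψ.ker) := ψ.ker.finite_quotient_of_finiteIndex
      have hfinR : Finite ↥ψ.range :=
        Finite.of_equiv _ (QuotientAddGroup.quotientKerEquivRange ψ).toEquiv
      let Φ : K → H ⧸ N := fun k =>
        if h : ∃ u, u ∈ lam.domLeft g' ∧ lam.toFun g' u = k
        then QuotientAddGroup.mk h.choose else 0
      have hsub : (relCoker ((lam.pairRel g g').map (mk.prodMap mk)) : Set (H ⧸ N)) ⊆
          Φ '' (ψ.range : Set K) := by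
        intro b hb
        have hb' : ((0 : H ⧸ N), b) ∈ (lam.pairRel g g').map (mk.prodMap mk) :=
          AddSubgroup.mem_comap.mp hb
        obtain ⟨⟨u, v⟩, hp, heq⟩ := AddSubgroup.mem_map.mp hb'
        obtain ⟨hud, hvd, huv⟩ := hp
        have hu0 : u ∈ N := (QuotientAddGroup.eq_zero_iff u).mp (congrArg Prod.fst heq)
        have hvb : mk v = b := congrArg Prod.snd heq
        have huS : u ∈ S := ⟨hu0, hud⟩
        refine ⟨lam.toFun g u, ⟨⟨u, huS⟩, rfl⟩, ?_⟩
        have hex : ∃ w, w ∈ lam.domLeft g' ∧ lam.toFun g' w = lam.toFun g u :=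
          ⟨v, hvd, huv.symm⟩
        show Φ (lam.toFun g u) = b
        have : Φ (lam.toFun g u) = QuotientAddGroup.mk hex.choose := dif_pos hex
        rw [this, ← hvb]
        obtain ⟨hwd, hwe⟩ := hex.choose_spec
        have hmem : hex.choose - v ∈ N := by
          refine ⟨(lam.domLeft g').sub_mem hwd hvd, ?_⟩
          rw [lam.toFun_sub_left g' hwd hvd, hwe, ← huv, sub_self]
        exact QuotientAddGroup.eq_iff_sub_mem.mpr hmem
      exact Set.Finite.subset (((ψ.range : Set K)).toFinite.image Φ) hsub

end BQF
end

section
/- Let λ : G × H ⇀ K be a bilinear quasi-form and let A be a subgroup of G. Then the almost annihilator aann_H(A) = {h ∈ H : A ⪅ ann_G(h)} is a subgroup of H, and it equals {h ∈ H : λ'_h[A ∩ dom λ'_h] is finite}. -/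
namespace BQF

variable {G H K : Type*} [AddCommGroup G] [AddCommGroup H] [AddCommGroup K]

section AuxLemmas

variable {G : Type*} [AddCommGroup G]

lemma almostLE_of_le {A X Y : AddSubgroup G} (h : AlmostLE A X) (hXY : X ≤ Y) :
    AlmostLE A Y := by
  intro h0
  exact h (AddSubgroup.relIndex_eq_zero_of_le_left (inf_le_inf_left A hXY) h0)

lemma almostLE_inf {A X Y : AddSubgroup G} (hX : AlmostLE A X) (hY : AlmostLE A Y) :
    AlmostLE A (X ⊓ Y) := by
  have := AddSubgroup.relIndex_inf_ne_zero hX hY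
  intro h0
  apply this
  apply AddSubgroup.relIndex_eq_zero_of_le_left _ h0
  exact le_inf (inf_le_left.trans inf_le_left) (inf_le_inf inf_le_right inf_le_right)

lemma almostLE_of_le' {A X : AddSubgroup G} (h : A ≤ X) : AlmostLE A X := by
  unfold AlmostLE
  rw [inf_eq_left.mpr h, AddSubgroup.relIndex_self]
  exact one_ne_zero

end AuxLemmas

namespace BilinQuasiForm

variable (lam : BilinQuasiForm G H K)

lemma mem_annG {g : G} {h : H} :
    g ∈ lam.annG h ↔ g ∈ lam.domRight h ∧ lam.toFun g h = 0 := Iff.rfl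

lemma annG_le_domRight (h : H) : lam.annG h ≤ lam.domRight h := fun _ hg => hg.1

lemma A_le_annG_zero (A : AddSubgroup G) : A ≤ lam.annG 0 := by
  intro g _
  refine ⟨(lam.dom_compat g 0).mp (lam.domLeft g).zero_mem, lam.toFun_zero_left g⟩

lemma annG_inf_le_annG_add (h h' : H) : lam.annG h ⊓ lam.annG h' ≤ lam.annG (h + h') := by
  rintro g ⟨⟨hg1, he1⟩, ⟨hg2, he2⟩⟩
  have hd1 : h ∈ lam.domLeft g := (lam.dom_compat g h).mpr hg1
  have hd2 : h' ∈ lam.domLeft g := (lam.dom_compat g h').mpr hg2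
  refine ⟨(lam.dom_compat g (h + h')).mp ((lam.domLeft g).add_mem hd1 hd2), ?_⟩
  rw [lam.add_left g h hd1 h' hd2, he1, he2, add_zero]

lemma annG_le_annG_neg (h : H) : lam.annG h ≤ lam.annG (-h) := by
  rintro g ⟨hg, he⟩
  have hd : h ∈ lam.domLeft g := (lam.dom_compat g h).mpr hg
  refine ⟨(lam.dom_compat g (-h)).mp ((lam.domLeft g).neg_mem hd), ?_⟩
  rw [lam.toFun_neg_left g h hd, he, neg_zero]

/-- The key equivalence: `A ⪅ ann_G(h)` iff the image of `A ∩ dom λ'_h` under `λ'_h`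
is finite. -/
lemma almostLE_annG_iff_finite_image (A : AddSubgroup G) (h : H) :
    AlmostLE A (lam.annG h) ↔
      Set.Finite ((fun g => lam.toFun g h) '' ((A : Set G) ∩ (lam.domRight h : Set G))) := by
  set D := lam.domRight h with hD
  set B := A ⊓ D with hB
  set N := A ⊓ lam.annG h with hN
  have hNB : N ≤ B := inf_le_inf_left A (lam.annG_le_domRight h)
  have hBA : B.relIndex A ≠ 0 := by
    intro h0
    rw [hB, inf_comm, AddSubgroup.inf_relIndex_right] at h0
    exact (lam.finiteIndex_right h).index_ne_zero (AddSubgroup.index_eq_zero_of_relIndex_eq_zero h0)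
  -- the homomorphism λ'_h on B
  set f : B →+ K :=
    { toFun := fun g => lam.toFun (g : G) h
      map_zero' := lam.toFun_zero_right h
      map_add' := by
        rintro ⟨a, ha⟩ ⟨b, hb⟩
        exact lam.add_right h a ha.2 b hb.2 } with hf
  have hker : f.ker = N.addSubgroupOf B := by
    ext ⟨g, hg⟩
    simp only [AddMonoidHom.mem_ker, AddSubgroup.mem_addSubgroupOf, hf, AddMonoidHom.coe_mk,
      ZeroHom.coe_mk, hN, AddSubgroup.mem_inf, lam.mem_annG]
    exact ⟨fun h0 => ⟨hg.1, hg.2, h0⟩, fun h0 => h0.2.2⟩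
  have hrange : Set.range ⇑f = (fun g => lam.toFun g h) '' ((A : Set G) ∩ (D : Set G)) := by
    have : ((A : Set G) ∩ (D : Set G)) = (B : Set G) := (AddSubgroup.coe_inf A D).symm
    rw [this]
    ext k
    constructor
    · rintro ⟨⟨g, hg⟩, rfl⟩; exact ⟨g, hg, rfl⟩
    · rintro ⟨g, hg, rfl⟩; exact ⟨⟨g, hg⟩, rfl⟩
  have hNfin : AlmostLE A (lam.annG h) ↔ f.ker.index ≠ 0 := by
    unfold AlmostLE
    rw [← hN, hker]
    change N.relIndex A ≠ 0 ↔ N.relIndex B ≠ 0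
    rw [← AddSubgroup.relIndex_mul_relIndex N B A hNB inf_le_left]
    constructor
    · exact fun hne h0 => hne (by rw [h0, zero_mul])
    · exact fun hne => mul_ne_zero hne hBA
  rw [hNfin, ← hrange]
  have hq : f.ker.index ≠ 0 ↔ Finite (B ⧸ f.ker) := by
    rw [Ne, AddSubgroup.index_eq_zero_iff_infinite, not_infinite_iff_finite]
  rw [hq]
  have e := (QuotientAddGroup.quotientKerEquivRange f).toEquiv
  constructor
  · intro hfin
    have : Finite f.range := Finite.of_equiv _ e
    rw [← Set.finite_coe_iff]
    exact this
  · intro hfin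
    have : Finite f.range := Set.finite_coe_iff.mpr hfin
    exact Finite.of_equiv _ e.symm

end BilinQuasiForm

/-- the almost annihilator `aann_H(A) = {h : A ⪅ ann_G(h)}` is a subgroup of
`H`, and it equals `{h : λ'_h[A ∩ dom λ'_h] is finite}`. -/
theorem almostAnnihilator_subgroup (lam : BilinQuasiForm G H K) (A : AddSubgroup G) :
    ∃ S : AddSubgroup H,
      (S : Set H) = {h : H | AlmostLE A (lam.annG h)} ∧
      (S : Set H) = {h : H |
        Set.Finite ((fun g => lam.toFun g h) '' ((A : Set G) ∩ (lam.domRight h : Set G)))} := by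
  refine ⟨{ carrier := {h : H | AlmostLE A (lam.annG h)}
            zero_mem' := almostLE_of_le' (lam.A_le_annG_zero A)
            add_mem' := fun ha hb =>
              almostLE_of_le (almostLE_inf ha hb) (lam.annG_inf_le_annG_add _ _)
            neg_mem' := fun ha => almostLE_of_le ha (lam.annG_le_annG_neg _) }, rfl, ?_⟩
  ext h
  exact lam.almostLE_annG_iff_finite_image A h

end BQF
end

section
/- Let λ : G × H ⇀ K be a bilinear quasi-form for which there is d < ω with |H : dom λ_g| ≤ d for all g ∈ G and |G : dom λ'_h| ≤ d for all h ∈ H. Then the image of λ is contained in a finite subgroup of K if and only if there is ℓ < ω such that |H : ann_H(g)| ≤ ℓ for all g ∈ G and |G : ann_G(h)| ≤ ℓ for all h ∈ H. -/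
namespace BQF


private lemma finite_sup {K : Type*} [AddCommGroup K] {A B : AddSubgroup K}
    (hA : (A : Set K).Finite) (hB : (B : Set K).Finite) :
    ((A ⊔ B : AddSubgroup K) : Set K).Finite := by
  have hsub : ((A ⊔ B : AddSubgroup K) : Set K) ⊆
      Set.image2 (· + ·) (A : Set K) (B : Set K) := by
    intro x hx
    rcases AddSubgroup.mem_sup.mp hx with ⟨y, hy, z, hz, hyz⟩
    exact ⟨y, hy, z, hz, hyz⟩
  exact (hA.image2 _ hB).subset hsub

private lemma torsion_of_mem_finite {K : Type*} [AddCommGroup K] {A : AddSubgroup K}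
    (hA : (A : Set K).Finite) {x : K} (hx : x ∈ A) : IsOfFinAddOrder x := by
  have hle : AddSubgroup.zmultiples x ≤ A := by
    rwa [AddSubgroup.zmultiples_le]
  have hfin : ((AddSubgroup.zmultiples x : AddSubgroup K) : Set K).Finite := hA.subset hle
  exact finite_zmultiples.mp hfin

private lemma finite_closure_torsion {K : Type*} [AddCommGroup K] {S : Set K} (hS : S.Finite)
    (ht : ∀ x ∈ S, IsOfFinAddOrder x) :
    ((AddSubgroup.closure S : AddSubgroup K) : Set K).Finite := by
  classical
  revert ht
  refine Set.Finite.induction_on (motive := fun s _ =>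
    (∀ x ∈ s, IsOfFinAddOrder x) → ((AddSubgroup.closure s : AddSubgroup K) : Set K).Finite)
    S hS ?_ ?_
  · intro _
    simpa [AddSubgroup.closure_empty] using Set.finite_singleton (0 : K)
  · intro x s _ _ ih ht
    have hx : IsOfFinAddOrder x := ht x (Set.mem_insert _ _)
    have hs : ∀ y ∈ s, IsOfFinAddOrder y := fun y hy => ht y (Set.mem_insert_of_mem _ hy)
    have hins : (insert x s : Set K) = {x} ∪ s := by simp
    rw [hins, AddSubgroup.closure_union]
    have h1 : ((AddSubgroup.closure {x} : AddSubgroup K) : Set K).Finite := by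
      rw [← AddSubgroup.zmultiples_eq_closure]
      exact hx.finite_zmultiples
    exact finite_sup h1 (ih hs)



private lemma ultra_colour {C : Type*} [Finite C] (U : Ultrafilter ℕ) (g : ℕ → C) :
    ∃ a : C, {n | g n = a} ∈ U := by
  obtain ⟨a, ha⟩ := Ultrafilter.eq_pure_of_finite (U.map g)
  refine ⟨a, ?_⟩
  have h1 : {a} ∈ U.map g := by rw [ha]; exact Filter.mem_pure.mpr rfl
  have h2 : g ⁻¹' {a} ∈ U := Ultrafilter.mem_map.mp h1
  simpa [Set.preimage, Set.mem_singleton_iff] using h2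

private lemma ramsey_pairs {C : Type*} [Finite C] [Nonempty C] (c : ℕ → ℕ → C) :
    ∃ (f : ℕ → ℕ) (col : C), StrictMono f ∧ ∀ i j, i < j → c (f i) (f j) = col := by
  classical
  set U := Filter.hyperfilter ℕ with hUdef
  have hne : ∀ S ∈ U, S.Nonempty := fun S hS => Ultrafilter.nonempty_of_mem hS
  have hIoi : ∀ v : ℕ, Set.Ioi v ∈ U := by
    intro v
    refine Filter.hyperfilter_le_cofinite ?_
    rw [Filter.mem_cofinite]
    simpa using Set.finite_Iic v
  choose cInf hcInf using fun x => ultra_colour U (c x)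
  obtain ⟨col, hcol⟩ := ultra_colour U cInf
  set I := {x | cInf x = col} with hIdef
  have hI : I ∈ U := hcol
  have hvI : ∀ v, v ∈ I → {m | c v m = col} ∈ U := by
    intro v hv
    have h := hcInf v
    rw [show cInf v = col from hv] at h
    exact h
  -- state type
  let P : ℕ × Set ℕ → Prop := fun p =>
    p.1 ∈ I ∧ p.2 ∈ U ∧ p.2 ⊆ I ∧ ∀ m ∈ p.2, p.1 < m ∧ c p.1 m = col
  have hmk : ∀ (v : ℕ), v ∈ I → ∀ (S : Set ℕ), S ∈ U → S ⊆ I →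
      P (v, S ∩ {m | c v m = col} ∩ Set.Ioi v) := by
    intro v hv S hS hSI
    refine ⟨hv, ?_, ?_, ?_⟩
    · exact Filter.inter_mem (Filter.inter_mem hS (hvI v hv)) (hIoi v)
    · intro m hm; exact hSI hm.1.1
    · intro m hm; exact ⟨hm.2, hm.1.2⟩
  have hinit : ∃ p, P p := by
    obtain ⟨v, hv⟩ := hne I hI
    exact ⟨_, hmk v hv I hI (fun _ h => h)⟩
  have hstep : ∀ p, P p → ∃ q, P q ∧ q.1 ∈ p.2 ∧ q.2 ⊆ p.2 := by
    intro p hp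
    obtain ⟨v, hv⟩ := hne p.2 hp.2.1
    refine ⟨(v, p.2 ∩ {m | c v m = col} ∩ Set.Ioi v), hmk v (hp.2.2.1 hv) p.2 hp.2.1 hp.2.2.1,
      hv, ?_⟩
    intro m hm; exact hm.1.1
  obtain ⟨p0, hp0⟩ := hinit
  choose stepf hstepP hstepMem hstepSub using hstep
  -- the sequence of states
  let seq : ℕ → {p : ℕ × Set ℕ // P p} := fun n =>
    Nat.rec ⟨p0, hp0⟩ (fun _ t => ⟨stepf t.1 t.2, hstepP t.1 t.2⟩) n
  have hseq_succ : ∀ n, (seq (n + 1)).1 = stepf (seq n).1 (seq n).2 := fun n => rfl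
  have hchain : ∀ m n, m ≤ n → ((seq n).1).2 ⊆ ((seq m).1).2 := by
    intro m n hmn
    induction n, hmn using Nat.le_induction with
    | base => exact fun _ h => h
    | succ n hmn ih =>
      intro x hx
      refine ih ?_
      rw [hseq_succ n] at hx
      exact hstepSub (seq n).1 (seq n).2 hx
  have hmemnext : ∀ n, ((seq (n + 1)).1).1 ∈ ((seq n).1).2 := by
    intro n
    rw [hseq_succ n]
    exact hstepMem (seq n).1 (seq n).2
  refine ⟨fun n => ((seq n).1).1, col, ?_, ?_⟩
  · have key : ∀ i j, i < j → ((seq i).1).1 < ((seq j).1).1 ∧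
        c ((seq i).1).1 ((seq j).1).1 = col := by
      intro i j hij
      obtain ⟨k, rfl⟩ := Nat.exists_eq_add_of_lt hij
      have h1 : ((seq (i + k + 1)).1).1 ∈ ((seq (i + k)).1).2 := hmemnext (i + k)
      have h2 : ((seq (i + k)).1).2 ⊆ ((seq i).1).2 := hchain i (i + k) (Nat.le_add_right _ _)
      exact (seq i).2.2.2.2 _ (h2 h1)
    exact fun i j hij => (key i j hij).1
  · intro i j hij
    obtain ⟨k, rfl⟩ := Nat.exists_eq_add_of_lt hij
    have h1 : ((seq (i + k + 1)).1).1 ∈ ((seq (i + k)).1).2 := hmemnext (i + k)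
    have h2 : ((seq (i + k)).1).2 ⊆ ((seq i).1).2 := hchain i (i + k) (Nat.le_add_right _ _)
    exact ((seq i).2.2.2.2 _ (h2 h1)).2


variable {G H K : Type*} [AddCommGroup G] [AddCommGroup H] [AddCommGroup K]

private lemma inf_index_ne_zero {A : Type*} [AddCommGroup A] (f : ℕ → AddSubgroup A)
    (hf : ∀ i, (f i).index ≠ 0) (n : ℕ) : (((Finset.range n).inf f).index) ≠ 0 := by
  induction n with
  | zero =>
    rw [Finset.range_zero, Finset.inf_empty]
    simp [AddSubgroup.index_top]
  | succ n ih =>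
    rw [Finset.range_add_one, Finset.inf_insert]
    haveI : ((Finset.range n).inf f).FiniteIndex := ⟨ih⟩
    haveI : (f n).FiniteIndex := ⟨hf n⟩
    exact (inferInstance : (f n ⊓ (Finset.range n).inf f).FiniteIndex).index_ne_zero


namespace BilinQuasiForm

variable (lam : BilinQuasiForm G H K)

theorem toFun_sum_right {ι : Type*} (s : Finset ι) (g : ι → G) (h : H)
    (hm : ∀ i ∈ s, g i ∈ lam.domRight h) :
    lam.toFun (∑ i ∈ s, g i) h = ∑ i ∈ s, lam.toFun (g i) h := by
  classical
  induction s using Finset.induction_on with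
  | empty => simpa using lam.toFun_zero_right h
  | @insert a s ha ih =>
    rw [Finset.sum_insert ha, Finset.sum_insert ha,
      lam.add_right h _ (hm a (Finset.mem_insert_self a s)) _
        (AddSubgroup.sum_mem _ fun i hi => hm i (Finset.mem_insert_of_mem hi)),
      ih fun i hi => hm i (Finset.mem_insert_of_mem hi)]

theorem toFun_nsmul_right (g : G) (h : H) (hh : h ∈ lam.domLeft g) (n : ℕ) :
    lam.toFun g (n • h) = n • lam.toFun g h := by
  induction n with
  | zero => simpa using lam.toFun_zero_left g
  | succ n ih =>
    rw [succ_nsmul, succ_nsmul, lam.add_left g _ (AddSubgroup.nsmul_mem _ hh n) _ hh, ih]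

theorem value_isOfFinAddOrder (g : G) (h : H) (hh : h ∈ lam.domLeft g)
    (hg : (lam.annH g).index ≠ 0) : IsOfFinAddOrder (lam.toFun g h) := by
  haveI : (lam.annH g).FiniteIndex := ⟨hg⟩
  have hmem : (lam.annH g).index • h ∈ lam.annH g :=
    AddSubgroup.nsmul_index_mem (lam.annH g) h
  have h0 : lam.toFun g ((lam.annH g).index • h) = 0 := hmem.2
  rw [lam.toFun_nsmul_right g h hh] at h0
  exact isOfFinAddOrder_iff_nsmul_eq_zero.mpr ⟨_, Nat.pos_of_ne_zero hg, h0⟩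

/-- The homomorphism `λ_g` on its domain. -/
def leftHom (g : G) : (lam.domLeft g) →+ K where
  toFun h := lam.toFun g h.1
  map_zero' := lam.toFun_zero_left g
  map_add' a b := lam.add_left g a.1 a.2 b.1 b.2

theorem value_mem_range_leftHom (g : G) (h : H) (hh : h ∈ lam.domLeft g) :
    lam.toFun g h ∈ Set.range (lam.leftHom g) := ⟨⟨h, hh⟩, rfl⟩

theorem card_range_leftHom (g : G) {l : ℕ} (hg0 : (lam.annH g).index ≠ 0)
    (hgl : (lam.annH g).index ≤ l) :
    Nat.card (Set.range (lam.leftHom g)) ≠ 0 ∧ Nat.card (Set.range (lam.leftHom g)) ≤ l := by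
  have hker : (lam.leftHom g).ker = (lam.annH g).addSubgroupOf (lam.domLeft g) := by
    ext x
    exact ⟨fun hx => ⟨x.2, hx⟩, fun hx => hx.2⟩
  have hrange : Nat.card (lam.leftHom g).range = ((lam.leftHom g).ker).index :=
    (AddSubgroup.index_ker (lam.leftHom g)).symm
  have hrel : ((lam.leftHom g).ker).index = (lam.annH g).relIndex (lam.domLeft g) := by
    rw [hker]; rfl
  have hle : lam.annH g ≤ lam.domLeft g := fun x hx => hx.1
  have hmul : (lam.annH g).relIndex (lam.domLeft g) * (lam.domLeft g).index
      = (lam.annH g).index := AddSubgroup.relIndex_mul_index hle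
  have hdnz : (lam.domLeft g).index ≠ 0 := (lam.finiteIndex_left g).index_ne_zero
  have hrelle : (lam.annH g).relIndex (lam.domLeft g) ≤ l := by
    calc (lam.annH g).relIndex (lam.domLeft g)
        ≤ (lam.annH g).relIndex (lam.domLeft g) * (lam.domLeft g).index :=
          Nat.le_mul_of_pos_right _ (Nat.pos_of_ne_zero hdnz)
      _ = (lam.annH g).index := hmul
      _ ≤ l := hgl
  have hrelnz : (lam.annH g).relIndex (lam.domLeft g) ≠ 0 := by
    intro hz
    rw [← hmul, hz, zero_mul] at hg0
    exact hg0 rfl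
  have hcard : Nat.card (Set.range (lam.leftHom g)) =
      (lam.annH g).relIndex (lam.domLeft g) := by
    rw [← hrel, ← hrange]
    have hco : ((lam.leftHom g).range : Set K) = Set.range (lam.leftHom g) :=
      AddMonoidHom.coe_range _
    rw [← hco]
    rfl
  rw [hcard]
  exact ⟨hrelnz, hrelle⟩

theorem finite_range_leftHom (g : G) {l : ℕ} (hg0 : (lam.annH g).index ≠ 0)
    (hgl : (lam.annH g).index ≤ l) : (Set.range (lam.leftHom g)).Finite := by
  have h := (lam.card_range_leftHom g hg0 hgl).1
  exact Set.finite_coe_iff.mp (Nat.card_ne_zero.mp h).2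

/-- The transpose quasi-form. -/
def flip : BilinQuasiForm H G K where
  toFun h g := lam.toFun g h
  domLeft := lam.domRight
  domRight := lam.domLeft
  dom_compat h g := (lam.dom_compat g h).symm
  finiteIndex_left := lam.finiteIndex_right
  finiteIndex_right := lam.finiteIndex_left
  add_left h g hg g' hg' := lam.add_right h g hg g' hg'
  add_right g h hh h' hh' := lam.add_left g h hh h' hh'

theorem flip_annH (h : H) : lam.flip.annH h = lam.annG h := rfl

theorem flip_annG (g : G) : lam.flip.annG g = lam.annH g := rfl

theorem sub_mem_domRight_of_mk_eq {τ : H} {a b : G}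
    (h : (QuotientAddGroup.mk a : G ⧸ lam.domRight τ) = QuotientAddGroup.mk b) :
    a - b ∈ lam.domRight τ := by
  have h1 : -a + b ∈ lam.domRight τ := (QuotientAddGroup.eq).mp h
  have h2 := (lam.domRight τ).neg_mem h1
  have h3 : -(-a + b) = a - b := by abel
  rwa [h3] at h2

theorem exists_emb_quot (d : ℕ) (hd2 : ∀ h : H, (lam.domRight h).index ≤ d) (τ : H) :
    ∃ ι : (G ⧸ lam.domRight τ) → Fin d, Function.Injective ι := by
  classical
  haveI : (lam.domRight τ).FiniteIndex := lam.finiteIndex_right τ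
  haveI : Finite (G ⧸ lam.domRight τ) := AddSubgroup.finite_quotient_of_finiteIndex
  haveI : Fintype (G ⧸ lam.domRight τ) := Fintype.ofFinite _
  have hcard : Fintype.card (G ⧸ lam.domRight τ) ≤ d := by
    rw [← Nat.card_eq_fintype_card, ← AddSubgroup.index_eq_card]
    exact hd2 τ
  exact ⟨(Fin.castLE hcard) ∘ (Fintype.equivFin _), fun a b hab =>
    (Fintype.equivFin _).injective (Fin.castLE_injective hcard hab)⟩

theorem sum_mem_domRight_of_classes {d : ℕ} (hd2 : ∀ h : H, (lam.domRight h).index ≤ d)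
    (τ : H) (s : Finset ℕ) (w : ℕ → G)
    (hpair : ∀ i ∈ s, ∀ j ∈ s, w i - w j ∈ lam.domRight τ)
    (hcard : d.factorial ∣ s.card) :
    (∑ i ∈ s, w i) ∈ lam.domRight τ := by
  classical
  rcases s.eq_empty_or_nonempty with rfl | ⟨i0, hi0⟩
  · simpa using (lam.domRight τ).zero_mem
  have hsplit : (∑ i ∈ s, w i) = (∑ i ∈ s, (w i - w i0)) + s.card • w i0 := by
    rw [Finset.sum_sub_distrib, Finset.sum_const]
    abel
  rw [hsplit]
  refine (lam.domRight τ).add_mem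
    (AddSubgroup.sum_mem _ fun i hi => hpair i hi i0 hi0) ?_
  -- show s.card • w i0 ∈ domRight τ
  haveI : (lam.domRight τ).FiniteIndex := lam.finiteIndex_right τ
  haveI : Finite (G ⧸ lam.domRight τ) := AddSubgroup.finite_quotient_of_finiteIndex
  rw [← QuotientAddGroup.eq_zero_iff]
  have hpush : (QuotientAddGroup.mk (s.card • w i0) : G ⧸ lam.domRight τ)
      = s.card • (QuotientAddGroup.mk (w i0) : G ⧸ lam.domRight τ) := by
    exact (QuotientAddGroup.mk' (lam.domRight τ)).map_nsmul _ _
  rw [hpush]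
  have hdvd : addOrderOf (QuotientAddGroup.mk (w i0) : G ⧸ lam.domRight τ) ∣ s.card := by
    refine dvd_trans (dvd_trans (addOrderOf_dvd_natCard _) ?_) hcard
    refine Nat.dvd_factorial Nat.card_pos ?_
    rw [← AddSubgroup.index_eq_card]
    exact hd2 τ
  exact addOrderOf_dvd_iff_nsmul_eq_zero.mp hdvd

/-- Key lemma: values of `λ` at positions `(w, σ)` with `w ∈ E` and `σ` in a fixed coset
of `D` all lie in a finite subgroup, provided the values on `E × D` lie in the finite
subgroup `F`. -/
theorem claimC {d l : ℕ}
    (hd2 : ∀ h : H, (lam.domRight h).index ≤ d)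
    (hannH : ∀ g : G, (lam.annH g).index ≠ 0 ∧ (lam.annH g).index ≤ l)
    (hannG : ∀ h : H, (lam.annG h).index ≠ 0 ∧ (lam.annG h).index ≤ l)
    (E : AddSubgroup G) (D : AddSubgroup H) (F : AddSubgroup K) (hF : (F : Set K).Finite)
    (hvals : ∀ e ∈ E, ∀ δ ∈ D, δ ∈ lam.domLeft e → lam.toFun e δ ∈ F) (σ0 : H) :
    ∃ Φ : AddSubgroup K, (Φ : Set K).Finite ∧
      ∀ w ∈ E, ∀ σ : H, σ - σ0 ∈ D → σ ∈ lam.domLeft w → lam.toFun w σ ∈ Φ := by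
  classical
  by_contra hcontra
  -- the base finite subgroup : F together with the column of σ0
  have hcolfin : (Set.range (lam.flip.leftHom σ0)).Finite :=
    lam.flip.finite_range_leftHom σ0 (hannG σ0).1 (hannG σ0).2
  have hcoltor : ∀ y ∈ Set.range (lam.flip.leftHom σ0), IsOfFinAddOrder y := by
    rintro y ⟨⟨a, ha⟩, rfl⟩
    exact lam.flip.value_isOfFinAddOrder σ0 a ha (hannG σ0).1
  set Φb : AddSubgroup K := F ⊔ AddSubgroup.closure (Set.range (lam.flip.leftHom σ0))
    with hΦbdef
  have hΦbfin : (Φb : Set K).Finite :=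
    finite_sup hF (finite_closure_torsion hcolfin hcoltor)
  have hcolmem : ∀ a : G, a ∈ lam.domRight σ0 → lam.toFun a σ0 ∈ Φb := by
    intro a ha
    refine le_sup_right (α := AddSubgroup K) ?_
    exact AddSubgroup.subset_closure ⟨⟨a, ha⟩, rfl⟩
  have hFmem : F ≤ Φb := le_sup_left
  -- the greedy escape
  have hcon : ∀ V : AddSubgroup K, (V : Set K).Finite → Φb ≤ V →
      ∃ p : G × H, p.1 ∈ E ∧ p.2 - σ0 ∈ D ∧ p.2 ∈ lam.domLeft p.1 ∧
        lam.toFun p.1 p.2 ∉ V := by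
    intro V hVfin _
    by_contra hno
    push_neg at hno
    exact hcontra ⟨V, hVfin, fun w hw σ hσD hσdom => hno (w, σ) hw hσD hσdom⟩
  -- greedy construction
  let P : (G × H) × AddSubgroup K → Prop := fun q =>
    (q.2 : Set K).Finite ∧ Φb ≤ q.2 ∧ q.1.1 ∈ E ∧ q.1.2 - σ0 ∈ D ∧
      q.1.2 ∈ lam.domLeft q.1.1 ∧ lam.toFun q.1.1 q.1.2 ∉ q.2
  have hinit : ∃ q, P q := by
    obtain ⟨p, hp1, hp2, hp3, hp4⟩ := hcon Φb hΦbfin le_rfl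
    exact ⟨(p, Φb), hΦbfin, le_rfl, hp1, hp2, hp3, hp4⟩
  have hstep : ∀ q, P q → ∃ q', P q' ∧ q.2 ≤ q'.2 ∧ lam.toFun q.1.1 q.1.2 ∈ q'.2 := by
    intro q hq
    set V' : AddSubgroup K := q.2 ⊔ AddSubgroup.zmultiples (lam.toFun q.1.1 q.1.2) with hV'
    have htor : IsOfFinAddOrder (lam.toFun q.1.1 q.1.2) :=
      lam.value_isOfFinAddOrder q.1.1 q.1.2 hq.2.2.2.2.1 (hannH q.1.1).1
    have hV'fin : (V' : Set K).Finite := finite_sup hq.1 htor.finite_zmultiples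
    have hΦV' : Φb ≤ V' := le_trans hq.2.1 le_sup_left
    obtain ⟨p, hp1, hp2, hp3, hp4⟩ := hcon V' hV'fin hΦV'
    refine ⟨(p, V'), ⟨hV'fin, hΦV', hp1, hp2, hp3, hp4⟩, le_sup_left, ?_⟩
    exact le_sup_right (α := AddSubgroup K) (AddSubgroup.mem_zmultiples _)
  obtain ⟨q0, hq0⟩ := hinit
  choose stepf hstepP hstepLe hstepMem using hstep
  let seq : ℕ → {q : (G × H) × AddSubgroup K // P q} := fun n =>
    Nat.rec ⟨q0, hq0⟩ (fun _ t => ⟨stepf t.1 t.2, hstepP t.1 t.2⟩) n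
  let w : ℕ → G := fun n => ((seq n).1).1.1
  let σ : ℕ → H := fun n => ((seq n).1).1.2
  let V : ℕ → AddSubgroup K := fun n => ((seq n).1).2
  have hseq_succ : ∀ n, (seq (n + 1)).1 = stepf (seq n).1 (seq n).2 := fun _ => rfl
  have hwE : ∀ n, w n ∈ E := fun n => (seq n).2.2.2.1
  have hσD : ∀ n, σ n - σ0 ∈ D := fun n => (seq n).2.2.2.2.1
  have hσdom : ∀ n, σ n ∈ lam.domLeft (w n) := fun n => (seq n).2.2.2.2.2.1
  have hnv : ∀ n, lam.toFun (w n) (σ n) ∉ V n := fun n => (seq n).2.2.2.2.2.2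
  have hΦV : ∀ n, Φb ≤ V n := fun n => (seq n).2.2.1
  have hVmono : ∀ m n, m ≤ n → V m ≤ V n := by
    intro m n hmn
    induction n, hmn using Nat.le_induction with
    | base => exact le_rfl
    | succ n hmn ih =>
      refine le_trans ih ?_
      have := hstepLe (seq n).1 (seq n).2
      rw [← hseq_succ n] at this
      exact this
  have hvV : ∀ n, lam.toFun (w n) (σ n) ∈ V (n + 1) := by
    intro n
    have := hstepMem (seq n).1 (seq n).2
    rw [← hseq_succ n] at this
    exact this
  -- Ramsey
  have hd1 : 0 < d := by
    have h1 : (lam.domRight σ0).index ≠ 0 := (lam.finiteIndex_right σ0).index_ne_zero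
    exact lt_of_lt_of_le (Nat.pos_of_ne_zero h1) (hd2 σ0)
  haveI : Nonempty (Fin d) := ⟨⟨0, hd1⟩⟩
  choose ι hιinj using fun τ => lam.exists_emb_quot d hd2 τ
  let cpair : ℕ → ℕ → (Fin d × Fin d × Fin d) := fun i j =>
    (ι (σ j) (QuotientAddGroup.mk (w i)), ι (σ i) (QuotientAddGroup.mk (w j)),
      ι σ0 (QuotientAddGroup.mk (w i)))
  obtain ⟨f, col, hfmono, hfcol⟩ := ramsey_pairs cpair
  -- class constancy facts
  have fact1 : ∀ i i' j : ℕ, i < j → i' < j →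
      w (f i) - w (f i') ∈ lam.domRight (σ (f j)) := by
    intro i i' j hij hi'j
    have h1 := hfcol i j hij
    have h2 := hfcol i' j hi'j
    have : ι (σ (f j)) (QuotientAddGroup.mk (w (f i)))
        = ι (σ (f j)) (QuotientAddGroup.mk (w (f i'))) := by
      have e1 := congrArg Prod.fst h1
      have e2 := congrArg Prod.fst h2
      simp only [cpair] at e1 e2
      rw [e1, e2]
    exact lam.sub_mem_domRight_of_mk_eq (hιinj (σ (f j)) this)
  have fact2 : ∀ i j j' : ℕ, i < j → i < j' →
      w (f j) - w (f j') ∈ lam.domRight (σ (f i)) := by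
    intro i j j' hij hij'
    have h1 := hfcol i j hij
    have h2 := hfcol i j' hij'
    have : ι (σ (f i)) (QuotientAddGroup.mk (w (f j)))
        = ι (σ (f i)) (QuotientAddGroup.mk (w (f j'))) := by
      have e1 := congrArg (fun p => p.2.1) h1
      have e2 := congrArg (fun p => p.2.1) h2
      simp only [cpair] at e1 e2
      rw [e1, e2]
    exact lam.sub_mem_domRight_of_mk_eq (hιinj (σ (f i)) this)
  have fact3 : ∀ i i' : ℕ, w (f i) - w (f i') ∈ lam.domRight σ0 := by
    intro i i'
    have h1 := hfcol i (max i i' + 1) (by omega)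
    have h2 := hfcol i' (max i i' + 1) (by omega)
    have : ι σ0 (QuotientAddGroup.mk (w (f i)))
        = ι σ0 (QuotientAddGroup.mk (w (f i'))) := by
      have e1 := congrArg (fun p => p.2.2) h1
      have e2 := congrArg (fun p => p.2.2) h2
      simp only [cpair] at e1 e2
      rw [e1, e2]
    exact lam.sub_mem_domRight_of_mk_eq (hιinj σ0 this)
  -- the element x
  set r : ℕ := d.factorial * l + 1 with hrdef
  let W : ℕ → G := fun i => w (f i)
  let S : ℕ → H := fun i => σ (f i)
  set x : G := ∑ i ∈ Finset.range r, W i with hxdef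
  have hxE : x ∈ E := AddSubgroup.sum_mem _ fun i _ => hwE (f i)
  have main : ∀ j : ℕ, j < r → d.factorial ∣ j →
      (S j ∈ lam.domLeft x ∧ lam.toFun x (S j) - lam.toFun (W j) (S j) ∈ Φb) := by
    intro j hjr hjdvd
    have hsplit : (Finset.range r).erase j = Finset.range j ∪ Finset.Ico (j + 1) r := by
      ext m
      simp only [Finset.mem_erase, Finset.mem_range, Finset.mem_union, Finset.mem_Ico]
      omega
    have hdisj : Disjoint (Finset.range j) (Finset.Ico (j + 1) r) := by
      rw [Finset.disjoint_left]
      intro m hm1 hm2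
      simp only [Finset.mem_range] at hm1
      simp only [Finset.mem_Ico] at hm2
      omega
    set Xj : G := ∑ i ∈ (Finset.range r).erase j, W i with hXjdef
    have hXj_dRj : Xj ∈ lam.domRight (S j) := by
      rw [hXjdef, hsplit, Finset.sum_union hdisj]
      refine (lam.domRight (S j)).add_mem ?_ ?_
      · refine lam.sum_mem_domRight_of_classes hd2 (S j) _ W ?_ ?_
        · intro a ha b hb
          simp only [Finset.mem_range] at ha hb
          exact fact1 a b j ha hb
        · simpa using hjdvd
      · refine lam.sum_mem_domRight_of_classes hd2 (S j) _ W ?_ ?_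
        · intro a ha b hb
          simp only [Finset.mem_Ico] at ha hb
          exact fact2 j a b (by omega) (by omega)
        · rw [Nat.card_Ico]
          have : r - (j + 1) = d.factorial * l - j := by omega
          rw [this]
          exact Nat.dvd_sub (Dvd.intro l rfl) hjdvd
    have hXj_dR0 : Xj ∈ lam.domRight σ0 := by
      rw [hXjdef]
      refine lam.sum_mem_domRight_of_classes hd2 σ0 _ W ?_ ?_
      · intro a _ b _
        exact fact3 a b
      · rw [Finset.card_erase_of_mem (Finset.mem_range.mpr hjr), Finset.card_range]
        have : r - 1 = d.factorial * l := by omega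
        rw [this]
        exact Dvd.intro l rfl
    have hWj_dRj : W j ∈ lam.domRight (S j) := (lam.dom_compat _ _).mp (hσdom (f j))
    have hx_eq : x = Xj + W j := by
      rw [hxdef, hXjdef, Finset.sum_erase_add _ _ (Finset.mem_range.mpr hjr)]
    have hx_dRj : x ∈ lam.domRight (S j) := by
      rw [hx_eq]; exact (lam.domRight (S j)).add_mem hXj_dRj hWj_dRj
    have hSj_dLx : S j ∈ lam.domLeft x := (lam.dom_compat _ _).mpr hx_dRj
    refine ⟨hSj_dLx, ?_⟩
    have hval1 : lam.toFun x (S j) = lam.toFun Xj (S j) + lam.toFun (W j) (S j) := by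
      rw [hx_eq]
      exact lam.add_right (S j) Xj hXj_dRj (W j) hWj_dRj
    -- decompose toFun Xj (S j)
    have hσ0_dLXj : σ0 ∈ lam.domLeft Xj := (lam.dom_compat _ _).mpr hXj_dR0
    have hSj_dLXj : S j ∈ lam.domLeft Xj := (lam.dom_compat _ _).mpr hXj_dRj
    have huj_dLXj : S j - σ0 ∈ lam.domLeft Xj := (lam.domLeft Xj).sub_mem hSj_dLXj hσ0_dLXj
    have hval2 : lam.toFun Xj (S j) = lam.toFun Xj σ0 + lam.toFun Xj (S j - σ0) := by
      have hrw : σ0 + (S j - σ0) = S j := by abel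
      calc lam.toFun Xj (S j) = lam.toFun Xj (σ0 + (S j - σ0)) := by rw [hrw]
        _ = lam.toFun Xj σ0 + lam.toFun Xj (S j - σ0) :=
          lam.add_left Xj σ0 hσ0_dLXj _ huj_dLXj
    have ht1 : lam.toFun Xj σ0 ∈ Φb := hcolmem Xj hXj_dR0
    have ht2 : lam.toFun Xj (S j - σ0) ∈ Φb := by
      refine hFmem (hvals Xj ?_ (S j - σ0) (hσD (f j)) huj_dLXj)
      exact AddSubgroup.sum_mem _ fun i _ => hwE (f i)
    have : lam.toFun x (S j) - lam.toFun (W j) (S j)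
        = lam.toFun Xj σ0 + lam.toFun Xj (S j - σ0) := by
      rw [hval1, hval2]; abel
    rw [this]
    exact Φb.add_mem ht1 ht2
  -- the l+1 distinct values
  have hdistinct : ∀ t t' : ℕ, t ≤ l → t' < t →
      lam.toFun x (S (d.factorial * t)) ≠ lam.toFun x (S (d.factorial * t')) := by
    intro t t' htl ht't heq
    have hjr : d.factorial * t < r := by
      have h1 : d.factorial * t ≤ d.factorial * l := Nat.mul_le_mul_left _ htl
      omega
    have hj'r : d.factorial * t' < r := by
      have h1 : d.factorial * t' < d.factorial * t := by
        have hp := Nat.factorial_pos d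
        exact (Nat.mul_lt_mul_left hp).mpr ht't
      omega
    obtain ⟨_, hm⟩ := main (d.factorial * t) hjr ⟨t, rfl⟩
    obtain ⟨_, hm'⟩ := main (d.factorial * t') hj'r ⟨t', rfl⟩
    -- value freshness contradiction
    set j := d.factorial * t
    set j' := d.factorial * t'
    have hjj' : j' < j := by
      have hp := Nat.factorial_pos d
      exact (Nat.mul_lt_mul_left hp).mpr ht't
    have hffle : f j' + 1 ≤ f j := hfmono hjj'
    have hv'mem : lam.toFun (W j') (S j') ∈ V (f j) :=
      hVmono (f j' + 1) (f j) hffle (hvV (f j'))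
    have : lam.toFun (W j) (S j) ∈ V (f j) := by
      have heq2 : lam.toFun (W j) (S j) = lam.toFun (W j') (S j') +
          (lam.toFun x (S j') - lam.toFun (W j') (S j')) -
          (lam.toFun x (S j) - lam.toFun (W j) (S j)) := by
        rw [← heq]; abel
      rw [heq2]
      exact (V (f j)).sub_mem ((V (f j)).add_mem hv'mem (hΦV (f j) hm')) (hΦV (f j) hm)
    exact hnv (f j) this
  -- contradiction with the size of the row of x
  have hxann := hannH x
  have hrowcard := (lam.card_range_leftHom x hxann.1 hxann.2).2
  have hrowfin : Finite ↥(Set.range (lam.leftHom x)) :=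
    (Nat.card_ne_zero.mp (lam.card_range_leftHom x hxann.1 hxann.2).1).2
  let emb : Fin (l + 1) → ↥(Set.range (lam.leftHom x)) := fun t =>
    ⟨lam.toFun x (S (d.factorial * t)), by
      refine lam.value_mem_range_leftHom x _ ?_
      refine (main (d.factorial * t) ?_ ⟨t, rfl⟩).1
      have h1 : (t : ℕ) ≤ l := Nat.lt_succ_iff.mp t.2
      have h2 : d.factorial * (t : ℕ) ≤ d.factorial * l := Nat.mul_le_mul_left _ h1
      omega⟩
  have hembinj : Function.Injective emb := by
    intro t t' heq
    by_contra hne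
    have hne' : (t : ℕ) ≠ (t' : ℕ) := fun h => hne (Fin.ext h)
    have hvaleq : lam.toFun x (S (d.factorial * t)) = lam.toFun x (S (d.factorial * t')) :=
      congrArg Subtype.val heq
    rcases Nat.lt_or_ge (t' : ℕ) (t : ℕ) with hlt | hge
    · exact hdistinct t t' (Nat.lt_succ_iff.mp t.2) hlt hvaleq
    · have hlt : (t : ℕ) < (t' : ℕ) := lt_of_le_of_ne hge hne'
      exact hdistinct t' t (Nat.lt_succ_iff.mp t'.2) hlt hvaleq.symm
  have hcardle := Nat.card_le_card_of_injective emb hembinj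
  simp only [Nat.card_eq_fintype_card, Fintype.card_fin] at hcardle
  omega

theorem card_range_eq_relindex (g : G) :
    Nat.card (Set.range (lam.leftHom g)) = (lam.annH g).relIndex (lam.domLeft g) := by
  have hker : (lam.leftHom g).ker = (lam.annH g).addSubgroupOf (lam.domLeft g) := by
    ext x
    exact ⟨fun hx => ⟨x.2, hx⟩, fun hx => hx.2⟩
  have hrange : Nat.card (lam.leftHom g).range = ((lam.leftHom g).ker).index :=
    (AddSubgroup.index_ker (lam.leftHom g)).symm
  have hrel : ((lam.leftHom g).ker).index = (lam.annH g).relIndex (lam.domLeft g) := by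
    rw [hker]; rfl
  rw [← hrel, ← hrange]
  have hco : ((lam.leftHom g).range : Set K) = Set.range (lam.leftHom g) :=
    AddMonoidHom.coe_range _
  rw [← hco]
  rfl

/-- One-sided core lemma: if the values of `λ` on `E × D` lie in a finite subgroup and
`D` has finite index, then the values of `λ` on `E × H` lie in a finite subgroup. -/
theorem oneSided {d l : ℕ}
    (hd2 : ∀ h : H, (lam.domRight h).index ≤ d)
    (hannH : ∀ g : G, (lam.annH g).index ≠ 0 ∧ (lam.annH g).index ≤ l)
    (hannG : ∀ h : H, (lam.annG h).index ≠ 0 ∧ (lam.annG h).index ≤ l)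
    (E : AddSubgroup G) (D : AddSubgroup H) (hD : D.index ≠ 0)
    (F : AddSubgroup K) (hF : (F : Set K).Finite)
    (hvals : ∀ e ∈ E, ∀ δ ∈ D, δ ∈ lam.domLeft e → lam.toFun e δ ∈ F) :
    ∃ F' : AddSubgroup K, ((F' : Set K)).Finite ∧
      ∀ e ∈ E, ∀ h ∈ lam.domLeft e, lam.toFun e h ∈ F' := by
  classical
  haveI : D.FiniteIndex := ⟨hD⟩
  haveI : Finite (H ⧸ D) := AddSubgroup.finite_quotient_of_finiteIndex
  choose Φ hΦfin hΦmem using fun c : H ⧸ D =>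
    lam.claimC hd2 hannH hannG E D F hF hvals (Quotient.out c)
  refine ⟨⨆ c : H ⧸ D, Φ c, ?_, ?_⟩
  · rw [AddSubgroup.iSup_eq_closure]
    refine finite_closure_torsion (Set.finite_iUnion fun c => hΦfin c) ?_
    intro x hx
    rw [Set.mem_iUnion] at hx
    obtain ⟨c, hc⟩ := hx
    exact torsion_of_mem_finite (hΦfin c) hc
  · intro e he h hdom
    set c : H ⧸ D := QuotientAddGroup.mk h with hcdef
    have hmkeq : (QuotientAddGroup.mk (Quotient.out c) : H ⧸ D) = QuotientAddGroup.mk h := by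
      exact Quotient.out_eq c
    have hsub : h - Quotient.out c ∈ D := by
      have h1 : -(Quotient.out c) + h ∈ D := (QuotientAddGroup.eq).mp hmkeq
      have h2 : -(-(Quotient.out c) + h) = Quotient.out c - h := by abel
      have h3 := D.neg_mem h1
      rw [h2] at h3
      have h4 := D.neg_mem h3
      have h5 : -(Quotient.out c - h) = h - Quotient.out c := by abel
      rwa [h5] at h4
    have := hΦmem c e he h hsub hdom
    exact AddSubgroup.mem_iSup_of_mem c this

/-- Two-sided core lemma: if the values of `λ` on a finite-index pair `E × D` lie in a
finite subgroup, then all values of `λ` lie in a finite subgroup. -/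
theorem core {d l : ℕ}
    (hd1 : ∀ g : G, (lam.domLeft g).index ≤ d)
    (hd2 : ∀ h : H, (lam.domRight h).index ≤ d)
    (hannH : ∀ g : G, (lam.annH g).index ≠ 0 ∧ (lam.annH g).index ≤ l)
    (hannG : ∀ h : H, (lam.annG h).index ≠ 0 ∧ (lam.annG h).index ≤ l)
    (E : AddSubgroup G) (D : AddSubgroup H) (hE : E.index ≠ 0) (hD : D.index ≠ 0)
    (F : AddSubgroup K) (hF : (F : Set K).Finite)
    (hvals : ∀ e ∈ E, ∀ δ ∈ D, δ ∈ lam.domLeft e → lam.toFun e δ ∈ F) :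
    ∃ F' : AddSubgroup K, ((F' : Set K)).Finite ∧
      ∀ g : G, ∀ h ∈ lam.domLeft g, lam.toFun g h ∈ F' := by
  obtain ⟨F₁, hF₁fin, hF₁⟩ := lam.oneSided hd2 hannH hannG E D hD F hF hvals
  have hannH' : ∀ h : H, (lam.flip.annH h).index ≠ 0 ∧ (lam.flip.annH h).index ≤ l := by
    intro h
    rw [lam.flip_annH]
    exact hannG h
  have hannG' : ∀ g : G, (lam.flip.annG g).index ≠ 0 ∧ (lam.flip.annG g).index ≤ l := by
    intro g
    rw [lam.flip_annG]
    exact hannH g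
  have hd2' : ∀ g : G, (lam.flip.domRight g).index ≤ d := hd1
  have hvals' : ∀ e ∈ (⊤ : AddSubgroup H), ∀ δ ∈ E, δ ∈ lam.flip.domLeft e →
      lam.flip.toFun e δ ∈ F₁ := by
    intro h _ δ hδE hδdom
    exact hF₁ δ hδE h ((lam.dom_compat δ h).mpr hδdom)
  obtain ⟨F₂, hF₂fin, hF₂⟩ := lam.flip.oneSided hd2' hannH' hannG'
    (⊤ : AddSubgroup H) E hE F₁ hF₁fin hvals'
  refine ⟨F₂, hF₂fin, ?_⟩
  intro g h hdom
  have hgmem : g ∈ lam.flip.domLeft h := (lam.dom_compat g h).mp hdom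
  exact hF₂ h trivial g hgmem

end BilinQuasiForm

/-- for a bilinear quasi-form with a uniform finite bound `d` on the indices
of the partial domains, the image of `λ` is contained in a finite subgroup of `K` if and
only if there is a uniform finite bound `ℓ` on the indices of all annihilators. -/
theorem almostTrivial_iff_bounded_annihilators (lam : BilinQuasiForm G H K) (d : ℕ)
    (hd1 : ∀ g : G, (lam.domLeft g).index ≤ d)
    (hd2 : ∀ h : H, (lam.domRight h).index ≤ d) :
    (∃ F : AddSubgroup K, ((F : Set K)).Finite ∧
        ∀ g : G, ∀ h ∈ lam.domLeft g, lam.toFun g h ∈ F) ↔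
      (∃ ℓ : ℕ, (∀ g : G, (lam.annH g).index ≠ 0 ∧ (lam.annH g).index ≤ ℓ) ∧
        (∀ h : H, (lam.annG h).index ≠ 0 ∧ (lam.annG h).index ≤ ℓ)) := by
  classical
  constructor
  · -- forward direction
    rintro ⟨F, hFfin, hFvals⟩
    haveI : Finite (F : Set K) := hFfin.to_subtype
    refine ⟨Nat.card (F : Set K) * d, ?_, ?_⟩
    · intro g
      have hsub : Set.range (lam.leftHom g) ⊆ (F : Set K) := by
        rintro y ⟨⟨h, hh⟩, rfl⟩
        exact hFvals g h hh
      have hrfin : (Set.range (lam.leftHom g)).Finite := hFfin.subset hsub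
      have hcardle : Nat.card (Set.range (lam.leftHom g)) ≤ Nat.card (F : Set K) :=
        Nat.card_le_card_of_injective (Set.inclusion hsub) (Set.inclusion_injective hsub)
      have hne : Nat.card (Set.range (lam.leftHom g)) ≠ 0 := by
        haveI : Finite (Set.range (lam.leftHom g)) := hrfin.to_subtype
        refine Nat.card_ne_zero.mpr ⟨⟨⟨lam.leftHom g 0, ⟨0, rfl⟩⟩⟩, inferInstance⟩
      have hrel := lam.card_range_eq_relindex g
      have hmul := AddSubgroup.relIndex_mul_index
        (show lam.annH g ≤ lam.domLeft g from fun x hx => hx.1)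
      constructor
      · rw [← hmul]
        exact Nat.mul_ne_zero (hrel ▸ hne) (lam.finiteIndex_left g).index_ne_zero
      · rw [← hmul]
        exact Nat.mul_le_mul (hrel ▸ hcardle) (hd1 g)
    · intro h
      have hsub : Set.range (lam.flip.leftHom h) ⊆ (F : Set K) := by
        rintro y ⟨⟨g, hg⟩, rfl⟩
        exact hFvals g h ((lam.dom_compat g h).mpr hg)
      have hrfin : (Set.range (lam.flip.leftHom h)).Finite := hFfin.subset hsub
      have hcardle : Nat.card (Set.range (lam.flip.leftHom h)) ≤ Nat.card (F : Set K) :=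
        Nat.card_le_card_of_injective (Set.inclusion hsub) (Set.inclusion_injective hsub)
      have hne : Nat.card (Set.range (lam.flip.leftHom h)) ≠ 0 := by
        haveI : Finite (Set.range (lam.flip.leftHom h)) := hrfin.to_subtype
        refine Nat.card_ne_zero.mpr ⟨⟨⟨lam.flip.leftHom h 0, ⟨0, rfl⟩⟩⟩, inferInstance⟩
      have hrel := lam.flip.card_range_eq_relindex h
      have hmul := AddSubgroup.relIndex_mul_index
        (show lam.flip.annH h ≤ lam.flip.domLeft h from fun x hx => hx.1)
      rw [← lam.flip_annH h]
      constructor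
      · rw [← hmul]
        exact Nat.mul_ne_zero (hrel ▸ hne) (lam.flip.finiteIndex_left h).index_ne_zero
      · rw [← hmul]
        exact Nat.mul_le_mul (hrel ▸ hcardle) (hd2 h)
  · -- backward direction
    rintro ⟨l, hl1, hl2⟩
    by_contra hcon
    -- greedy construction of an orthogonal system with fresh values
    have grow : ∀ n : ℕ, ∃ gh : ℕ → G × H,
        (∀ t, t < n → (gh t).2 ∈ lam.domLeft (gh t).1) ∧
        (∀ s t, s < t → t < n → (gh t).2 ∈ lam.annH (gh s).1) ∧
        (∀ s t, t < s → s < n → (gh s).1 ∈ lam.annG (gh t).2) ∧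
        (∀ t, t < n → lam.toFun (gh t).1 (gh t).2 ∉
          AddSubgroup.closure ((fun s => lam.toFun (gh s).1 (gh s).2) '' (Set.Iio t))) := by
      intro n
      induction n with
      | zero =>
        exact ⟨fun _ => (0, 0), fun t ht => absurd ht (by omega),
          fun s t _ ht => absurd ht (by omega), fun s t _ ht => absurd ht (by omega),
          fun t ht => absurd ht (by omega)⟩
      | succ n ih =>
        obtain ⟨gh, hdom, hup, hlow, hfresh⟩ := ih
        set Eacc : AddSubgroup G := (Finset.range n).inf (fun s => lam.annG (gh s).2)
          with hEaccdef
        set Dacc : AddSubgroup H := (Finset.range n).inf (fun s => lam.annH (gh s).1)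
          with hDaccdef
        have hEidx : Eacc.index ≠ 0 :=
          inf_index_ne_zero _ (fun s => (hl2 (gh s).2).1) n
        have hDidx : Dacc.index ≠ 0 :=
          inf_index_ne_zero _ (fun s => (hl1 (gh s).1).1) n
        set Vset : Set K := (fun s => lam.toFun (gh s).1 (gh s).2) '' (Set.Iio n) with hVsetdef
        have hVfin : ((AddSubgroup.closure Vset : AddSubgroup K) : Set K).Finite := by
          refine finite_closure_torsion ((Set.finite_Iio n).image _) ?_
          rintro x ⟨s, hs, rfl⟩
          exact lam.value_isOfFinAddOrder _ _ (hdom s hs) (hl1 _).1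
        have hex : ∃ g h, g ∈ Eacc ∧ h ∈ Dacc ∧ h ∈ lam.domLeft g ∧
            lam.toFun g h ∉ AddSubgroup.closure Vset := by
          by_contra hno
          push_neg at hno
          obtain ⟨F', hfin, hall⟩ := lam.core hd1 hd2 hl1 hl2 Eacc Dacc hEidx hDidx
            (AddSubgroup.closure Vset) hVfin
            (fun e he δ hδ hdomδ => hno e δ he hδ hdomδ)
          exact hcon ⟨F', hfin, fun g h hh => hall g h hh⟩
        obtain ⟨gn, hn, hgnE, hhnD, hdomn, hfreshn⟩ := hex
        refine ⟨fun t => if t < n then gh t else (gn, hn), ?_, ?_, ?_, ?_⟩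
        · intro t ht
          by_cases htn : t < n
          · simpa [htn] using hdom t htn
          · have : t = n := by omega
            simp [htn, this, hdomn]
        · intro s t hst ht
          have hsn : s < n ∨ ¬ s < n := em _
          by_cases htn : t < n
          · have hsn' : s < n := by omega
            simpa [htn, hsn'] using hup s t hst htn
          · have htn' : t = n := by omega
            have hsn' : s < n := by omega
            have hle : Dacc ≤ lam.annH (gh s).1 :=
              Finset.inf_le (Finset.mem_range.mpr hsn')
            simpa [htn, htn', hsn'] using hle hhnD
        · intro s t hts hs
          by_cases hsn : s < n
          · have htn' : t < n := by omega
            simpa [hsn, htn'] using hlow s t hts hsn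
          · have hsn' : s = n := by omega
            have htn' : t < n := by omega
            have hle : Eacc ≤ lam.annG (gh t).2 :=
              Finset.inf_le (Finset.mem_range.mpr htn')
            simpa [hsn, hsn', htn'] using hle hgnE
        · intro t ht
          by_cases htn : t < n
          · have himg : ((fun s => lam.toFun (if s < n then gh s else (gn, hn)).1
                (if s < n then gh s else (gn, hn)).2) '' (Set.Iio t))
                = ((fun s => lam.toFun (gh s).1 (gh s).2) '' (Set.Iio t)) := by
              refine Set.image_congr ?_
              intro s hs
              have hs' : s < t := hs
              have hsn : s < n := by omega
              simp [hsn]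
            simpa [htn, himg] using hfresh t htn
          · have htn' : t = n := by omega
            have himg : ((fun s => lam.toFun (if s < n then gh s else (gn, hn)).1
                (if s < n then gh s else (gn, hn)).2) '' (Set.Iio t))
                = Vset := by
              rw [hVsetdef, htn']
              refine Set.image_congr ?_
              intro s hs
              have hsn : s < n := hs
              simp [hsn]
            simpa [htn, htn', himg] using hfreshn
    -- endgame: build the element with a too-large row
    obtain ⟨gh, hdom, hup, hlow, hfresh⟩ := grow (l + 1)
    set x : G := ∑ t ∈ Finset.range (l + 1), (gh t).1 with hxdef
    have hdR : ∀ t, t < l + 1 → ∀ s, s < l + 1 → (gh s).1 ∈ lam.domRight ((gh t).2) := by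
      intro t ht s hs
      rcases Nat.lt_trichotomy s t with hst | rfl | hts
      · exact (lam.dom_compat _ _).mp (hup s t hst ht).1
      · exact (lam.dom_compat _ _).mp (hdom s hs)
      · exact (hlow s t hts hs).1
    have hxdR : ∀ t, t < l + 1 → x ∈ lam.domRight ((gh t).2) := by
      intro t ht
      exact AddSubgroup.sum_mem _ fun s hsr => hdR t ht s (Finset.mem_range.mp hsr)
    have hxval : ∀ t, t < l + 1 →
        lam.toFun x ((gh t).2) = lam.toFun (gh t).1 ((gh t).2) := by
      intro t ht
      rw [hxdef, lam.toFun_sum_right _ _ _ (fun s hsr => hdR t ht s (Finset.mem_range.mp hsr))]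
      refine Finset.sum_eq_single_of_mem t (Finset.mem_range.mpr ht) ?_
      intro s hsr hst
      rcases Nat.lt_trichotomy s t with h1 | h2 | h3
      · exact (hup s t h1 ht).2
      · exact absurd h2 hst
      · exact (hlow s t h3 (Finset.mem_range.mp hsr)).2
    have hdistinct : ∀ t t', t < l + 1 → t' < t →
        lam.toFun x ((gh t).2) ≠ lam.toFun x ((gh t').2) := by
      intro t t' ht ht't heq
      rw [hxval t ht, hxval t' (by omega)] at heq
      refine hfresh t ht ?_
      rw [heq]
      exact AddSubgroup.subset_closure ⟨t', ht't, rfl⟩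
    have hxann := hl1 x
    have hrowcard := (lam.card_range_leftHom x hxann.1 hxann.2).2
    haveI hrowfin : Finite ↥(Set.range (lam.leftHom x)) :=
      (Nat.card_ne_zero.mp (lam.card_range_leftHom x hxann.1 hxann.2).1).2
    let emb : Fin (l + 1) → ↥(Set.range (lam.leftHom x)) := fun t =>
      ⟨lam.toFun x ((gh t).2), lam.value_mem_range_leftHom x _
        ((lam.dom_compat _ _).mpr (hxdR t t.2))⟩
    have hembinj : Function.Injective emb := by
      intro t t' heq
      by_contra hne
      have hne' : (t : ℕ) ≠ (t' : ℕ) := fun h => hne (Fin.ext h)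
      have hvaleq : lam.toFun x ((gh (t : ℕ)).2) = lam.toFun x ((gh (t' : ℕ)).2) :=
        congrArg Subtype.val heq
      rcases Nat.lt_or_ge (t' : ℕ) (t : ℕ) with hlt | hge
      · exact hdistinct t t' t.2 hlt hvaleq
      · have hlt : (t : ℕ) < (t' : ℕ) := lt_of_le_of_ne hge hne'
        exact hdistinct t' t t'.2 hlt hvaleq.symm
    have hcardle := Nat.card_le_card_of_injective emb hembinj
    simp only [Nat.card_eq_fintype_card, Fintype.card_fin] at hcardle
    omega

end BQF
end
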